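/- arXiv:1010.0852 — 4 statements merged into one kernel-verified Lean document; each statement's English description precedes it below -/
import Mathlib

section
/- In a finite median graph G, every nonempty convex set S of vertices is the intersection of all halfspaces of G containing S; equivalently, for every vertex v with v ∉ S there exists a halfspace H of G with S ⊆ H and v ∉ H. -/
open SimpleGraph Finset

/-- The graph interval `I(u,v)`: vertices on shortest `(u,v)`-paths. -/
def interval {V : Type*} (G : SimpleGraph V) (u v : V) : Set V :=
  {w | G.dist u w + G.dist w v = G.dist u v}

/-- A median graph: connected, and every triple of vertices has a unique median. -/
def IsMedianGraph {V : Type*} (G : SimpleGraph V) : Prop :=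
  G.Connected ∧ ∀ x y z : V, ∃! m : V,
    m ∈ interval G x y ∧ m ∈ interval G y z ∧ m ∈ interval G x z

/-- A set of vertices is (graph) convex if it contains all intervals between its members. -/
def GraphConvex {V : Type*} (G : SimpleGraph V) (S : Set V) : Prop :=
  ∀ u ∈ S, ∀ v ∈ S, interval G u v ⊆ S

/-- A halfspace: a convex set with convex complement. -/
def IsHalfspace {V : Type*} (G : SimpleGraph V) (H : Set V) : Prop :=
  GraphConvex G H ∧ GraphConvex G Hᶜ

/-- The hypercube graph `Q_k`: vertices are `{0,1}^k`, adjacent iff they differ in exactly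
one coordinate. -/
def cubeGraph (k : ℕ) : SimpleGraph (Fin k → Fin 2) :=
  SimpleGraph.fromRel (fun a b => ∃! i, a i ≠ b i)

/-- A graph is cube-free if it has no induced subgraph isomorphic to `Q_3`. -/
def CubeFree {V : Type*} (G : SimpleGraph V) : Prop :=
  ¬ Nonempty (cubeGraph 3 ↪g G)

/-- A 4-cycle of the subgraph of `G` induced by `S`: a 4-element vertex subset of `S`
inducing a cycle of length 4. -/
def IsFourCycleIn {V : Type*} (G : SimpleGraph V) (S : Set V) (t : Finset V) : Prop :=
  (↑t : Set V) ⊆ S ∧ t.card = 4 ∧ Nonempty (G.induce (↑t : Set V) ≃g SimpleGraph.cycleGraph 4)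

section Aux

variable {V : Type*} {G : SimpleGraph V}

lemma mem_interval_iff {u v w : V} :
    w ∈ interval G u v ↔ G.dist u w + G.dist w v = G.dist u v := Iff.rfl

/-- For an edge `ab`, every vertex is strictly closer to one end. -/
lemma wside_split (hG : IsMedianGraph G) {a b : V} (hab : G.Adj a b) (w : V) :
    G.dist w b = G.dist w a + 1 ∨ G.dist w a = G.dist w b + 1 := by
  obtain ⟨m, ⟨h1, h2, h3⟩, -⟩ := hG.2 a b w
  rw [mem_interval_iff] at h1 h2 h3
  have hab1 : G.dist a b = 1 := dist_eq_one_iff_adj.mpr hab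
  have hba1 : G.dist b a = 1 := dist_eq_one_iff_adj.mpr hab.symm
  have c1 : G.dist a w = G.dist w a := SimpleGraph.dist_comm
  have c2 : G.dist b w = G.dist w b := SimpleGraph.dist_comm
  rcases Nat.eq_zero_or_pos (G.dist a m) with h0 | h0
  · have ham : a = m := hG.1.dist_eq_zero_iff.mp h0
    rw [← ham] at h2
    left; omega
  · have hmb : G.dist m b = 0 := by omega
    have hmb' : m = b := hG.1.dist_eq_zero_iff.mp hmb
    rw [hmb'] at h3
    right; omega

/-- Key induction: no point of `W(b,a)` lies on a geodesic between two points of `W(a,b)`. -/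
lemma wside_key (hG : IsMedianGraph G) {a b : V} (hab : G.Adj a b) :
    ∀ n k (x y z : V), G.dist z a ≤ n → G.dist x y ≤ k →
      G.dist x b = G.dist x a + 1 → G.dist y b = G.dist y a + 1 →
      G.dist x z + G.dist z y = G.dist x y →
      G.dist z a = G.dist z b + 1 → False := by
  have hab1 : G.dist a b = 1 := dist_eq_one_iff_adj.mpr hab
  intro n
  induction n with
  | zero => intro k x y z hn _ _ _ _ hzw; omega
  | succ n ihn =>
    intro k
    induction k with
    | zero =>
      intro x y z hn hk hx hy hzi hzw
      have hxz0 : G.dist x z = 0 := by omega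
      have hxz : x = z := hG.1.dist_eq_zero_iff.mp hxz0
      rw [← hxz] at hzw; omega
    | succ k ihk =>
      intro x y z hn hk hx hy hzi hzw
      -- p = median of x, z, b
      obtain ⟨p, ⟨hp1, hp2, hp3⟩, -⟩ := hG.2 x z b
      rw [mem_interval_iff] at hp1 hp2 hp3
      -- hp1 : d x p + d p z = d x z ; hp2 : d z p + d p b = d z b ; hp3 : d x p + d p b = d x b
      rcases wside_split hG hab p with hpW | hpW
      · -- p ∈ W(a,b) : d p b = d p a + 1
        rcases Nat.eq_zero_or_pos (G.dist x p) with h0 | h0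
        · -- p = x, so x ∈ I(z,b): contradiction
          have hpx : x = p := hG.1.dist_eq_zero_iff.mp h0
          rw [← hpx] at hp2 hpW
          have t1 : G.dist z a ≤ G.dist z x + G.dist x a := hG.1.dist_triangle
          omega
        · -- recurse on (p, y, z) with smaller d p y
          have t1 : G.dist p y ≤ G.dist p z + G.dist z y := hG.1.dist_triangle
          have t2 : G.dist x y ≤ G.dist x p + G.dist p y := hG.1.dist_triangle
          have c1 : G.dist p z = G.dist z p := SimpleGraph.dist_comm
          have hzIpy : G.dist p z + G.dist z y = G.dist p y := by omega
          exact ihk p y z hn (by omega) hpW hy hzIpy hzw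
      · -- p ∈ W(b,a) : d p a = d p b + 1
        rcases Nat.eq_zero_or_pos (G.dist z p) with h0 | h0
        · -- p = z, so z ∈ I(x,b); look at q = median of y, z, b
          have hpz : z = p := hG.1.dist_eq_zero_iff.mp h0
          rw [← hpz] at hp3
          -- hp3 : d x z + d z b = d x b
          obtain ⟨q, ⟨hq1, hq2, hq3⟩, -⟩ := hG.2 y z b
          rw [mem_interval_iff] at hq1 hq2 hq3
          -- hq1 : d y q + d q z = d y z ; hq2 : d z q + d q b = d z b ; hq3 : d y q + d q b = d y b
          rcases wside_split hG hab q with hqW | hqW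
          · -- q ∈ W(a,b)
            rcases Nat.eq_zero_or_pos (G.dist y q) with h1 | h1
            · -- q = y, so y ∈ I(z,b): contradiction
              have hqy : y = q := hG.1.dist_eq_zero_iff.mp h1
              rw [← hqy] at hq2
              have t1 : G.dist z a ≤ G.dist z y + G.dist y a := hG.1.dist_triangle
              omega
            · -- recurse on (x, q, z) with smaller d x q
              have c1 : G.dist q z = G.dist z q := SimpleGraph.dist_comm
              have c2 : G.dist y q = G.dist q y := SimpleGraph.dist_comm
              have c3 : G.dist z y = G.dist y z := SimpleGraph.dist_comm
              have t1 : G.dist x q ≤ G.dist x z + G.dist z q := hG.1.dist_triangle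
              have t2 : G.dist x y ≤ G.dist x q + G.dist q y := hG.1.dist_triangle
              have hzIxq : G.dist x z + G.dist z q = G.dist x q := by omega
              exact ihk x q z hn (by omega) hx hqW hzIxq hzw
          · -- q ∈ W(b,a)
            rcases Nat.eq_zero_or_pos (G.dist z q) with h1 | h1
            · -- q = z : z is the median of (x, y, b); but the median of (x, y, a)
              -- also is, and lies in W(a,b): contradiction
              have hqz : z = q := hG.1.dist_eq_zero_iff.mp h1
              rw [← hqz] at hq3
              -- hq3 : d y z + d z b = d y b
              obtain ⟨m0, hm0, hm0u⟩ := hG.2 x y b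
              obtain ⟨m', ⟨hm'1, hm'2, hm'3⟩, -⟩ := hG.2 x y a
              rw [mem_interval_iff] at hm'1 hm'2 hm'3
              have tb1 : G.dist m' b ≤ G.dist m' a + G.dist a b := hG.1.dist_triangle
              have tb2 : G.dist x b ≤ G.dist x m' + G.dist m' b := hG.1.dist_triangle
              have tb3 : G.dist y b ≤ G.dist y m' + G.dist m' b := hG.1.dist_triangle
              have hm'xb : G.dist x m' + G.dist m' b = G.dist x b := by omega
              have hm'yb : G.dist y m' + G.dist m' b = G.dist y b := by omega
              have c1 : G.dist z y = G.dist y z := SimpleGraph.dist_comm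
              have hzm : z = m0 := hm0u z ⟨by rw [mem_interval_iff]; omega,
                by rw [mem_interval_iff]; omega, by rw [mem_interval_iff]; omega⟩
              have hm'm : m' = m0 := hm0u m' ⟨by rw [mem_interval_iff]; omega,
                by rw [mem_interval_iff]; omega, by rw [mem_interval_iff]; omega⟩
              have heq : m' = z := by rw [hm'm, ← hzm]
              rw [heq] at hm'3 hm'xb
              omega
            · -- recurse via ihn on (x, y, q) with smaller d q a
              have c1 : G.dist q z = G.dist z q := SimpleGraph.dist_comm
              have c2 : G.dist y q = G.dist q y := SimpleGraph.dist_comm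
              have c3 : G.dist z y = G.dist y z := SimpleGraph.dist_comm
              have t1 : G.dist x q ≤ G.dist x z + G.dist z q := hG.1.dist_triangle
              have t2 : G.dist x y ≤ G.dist x q + G.dist q y := hG.1.dist_triangle
              have hqIxy : G.dist x q + G.dist q y = G.dist x y := by omega
              exact ihn (G.dist x y) x y q (by omega) le_rfl hx hy hqIxy hqW
        · -- p ≠ z, p ∈ W(b,a): recurse via ihn on (x, y, p)
          have t1 : G.dist p y ≤ G.dist p z + G.dist z y := hG.1.dist_triangle
          have t2 : G.dist x y ≤ G.dist x p + G.dist p y := hG.1.dist_triangle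
          have c1 : G.dist p z = G.dist z p := SimpleGraph.dist_comm
          have hpIxy : G.dist x p + G.dist p y = G.dist x y := by omega
          exact ihn (G.dist x y) x y p (by omega) le_rfl hx hy hpIxy hpW

lemma wside_convex (hG : IsMedianGraph G) {a b : V} (hab : G.Adj a b) :
    GraphConvex G {x | G.dist x b = G.dist x a + 1} := by
  intro x hx y hy z hz
  rcases wside_split hG hab z with h | h
  · exact h
  · exact absurd h (fun h' =>
      wside_key hG hab (G.dist z a) (G.dist x y) x y z le_rfl le_rfl hx hy hz h')

lemma wside_halfspace (hG : IsMedianGraph G) {a b : V} (hab : G.Adj a b) :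
    IsHalfspace G {x | G.dist x b = G.dist x a + 1} := by
  refine ⟨wside_convex hG hab, ?_⟩
  have hc : ({x | G.dist x b = G.dist x a + 1}ᶜ : Set V)
      = {x | G.dist x a = G.dist x b + 1} := by
    ext w
    simp only [Set.mem_compl_iff, Set.mem_setOf_eq]
    rcases wside_split hG hab w with h | h
    · constructor
      · intro h'; omega
      · intro h'; omega
    · constructor
      · intro _; exact h
      · intro _; omega
  rw [hc]
  exact wside_convex hG hab.symm

end Aux

/-- In a finite median graph, every nonempty convex vertex set `S` is the
intersection of all halfspaces containing it; equivalently, for every vertex `v ∉ S` there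
is a halfspace `H` with `S ⊆ H` and `v ∉ H`. -/
theorem convex_eq_sInter_halfspaces {V : Type*} [Fintype V] (G : SimpleGraph V)
    (hG : IsMedianGraph G) (S : Set V) (hne : S.Nonempty) (hconv : GraphConvex G S) :
    S = ⋂₀ {H : Set V | IsHalfspace G H ∧ S ⊆ H} ∧
      ∀ v : V, v ∉ S → ∃ H : Set V, IsHalfspace G H ∧ S ⊆ H ∧ v ∉ H := by
  classical
  have part2 : ∀ v : V, v ∉ S → ∃ H : Set V, IsHalfspace G H ∧ S ⊆ H ∧ v ∉ H := by
    intro v hv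
    obtain ⟨s0, hs0⟩ := hne
    obtain ⟨g, hg, hgmin⟩ := Finset.exists_min_image
      (Finset.univ.filter (fun s => s ∈ S)) (fun s => G.dist v s)
      ⟨s0, by simp [hs0]⟩
    simp only [Finset.mem_filter, Finset.mem_univ, true_and] at hg hgmin
    have hgate : ∀ s ∈ S, G.dist v g + G.dist g s = G.dist v s := by
      intro s hs
      obtain ⟨m, ⟨h1, h2, h3⟩, -⟩ := hG.2 v g s
      have hmS : m ∈ S := hconv g hg s hs h2
      rw [mem_interval_iff] at h1 h3
      have hmin := hgmin m (by simpa using hmS)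
      have hm0 : G.dist m g = 0 := by omega
      have hmg : m = g := hG.1.dist_eq_zero_iff.mp hm0
      rw [hmg] at h3
      omega
    have hvg : G.dist v g ≠ 0 := by
      intro h
      exact hv ((hG.1.dist_eq_zero_iff.mp h) ▸ hg)
    have hgv : G.dist g v = G.dist v g := SimpleGraph.dist_comm
    obtain ⟨p, hp⟩ := hG.1.exists_walk_length_eq_dist g v
    cases p with
    | nil => rw [SimpleGraph.Walk.length_nil] at hp; omega
    | @cons _ u _ hadj q =>
      have hql : q.length + 1 = G.dist g v := by simpa using hp
      have hdu : G.dist u v ≤ q.length := SimpleGraph.dist_le q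
      have htri : G.dist g v ≤ G.dist g u + G.dist u v := hG.1.dist_triangle
      have hgu : G.dist g u = 1 := dist_eq_one_iff_adj.mpr hadj
      have cuv : G.dist u v = G.dist v u := SimpleGraph.dist_comm
      have hstep : G.dist v g = G.dist v u + 1 := by omega
      refine ⟨{x | G.dist x u = G.dist x g + 1}, wside_halfspace hG hadj, ?_, ?_⟩
      · intro s hs
        rcases wside_split hG hadj s with h | h
        · exact h
        · exfalso
          have h1 := hgate s hs
          have t1 : G.dist v s ≤ G.dist v u + G.dist u s := hG.1.dist_triangle
          have c1 : G.dist u s = G.dist s u := SimpleGraph.dist_comm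
          have c2 : G.dist g s = G.dist s g := SimpleGraph.dist_comm
          omega
      · intro hvH
        simp only [Set.mem_setOf_eq] at hvH
        omega
  refine ⟨?_, part2⟩
  ext x
  simp only [Set.mem_sInter, Set.mem_setOf_eq]
  constructor
  · intro hx H hH
    exact hH.2 hx
  · intro h
    by_contra hx
    obtain ⟨H, hH, hSH, hvH⟩ := part2 x hx
    exact hvH (h H ⟨hH, hSH⟩)
end

section
/- Let G be a finite cube-free median graph and let p and q be vertices of G. Then there exists an isometric embedding of I(p,q) into the square grid, i.e., a map f : I(p,q) → ℤ² such that d(u,v) = |f(u)_1 − f(v)_1| + |f(u)_2 − f(v)_2| for all u, v ∈ I(p,q). -/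
open SimpleGraph Finset

set_option maxHeartbeats 1000000

namespace IntervalGrid

variable {V : Type*} {G : SimpleGraph V}

lemma mem_interval {a b z : V} :
    z ∈ interval G a b ↔ G.dist a z + G.dist z b = G.dist a b := Iff.rfl

lemma left_mem_interval (a b : V) : a ∈ interval G a b := by
  simp [mem_interval, SimpleGraph.dist_self]

lemma right_mem_interval (a b : V) : b ∈ interval G a b := by
  simp [mem_interval, SimpleGraph.dist_self]

lemma interval_comm {a b z : V} : z ∈ interval G a b ↔ z ∈ interval G b a := by
  have h1 : G.dist a z = G.dist z a := SimpleGraph.dist_comm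
  have h2 : G.dist z b = G.dist b z := SimpleGraph.dist_comm
  have h3 : G.dist a b = G.dist b a := SimpleGraph.dist_comm
  rw [mem_interval, mem_interval]
  omega

lemma dist_eq_one_of_adj (h : G.Adj a b) : G.dist a b = 1 :=
  SimpleGraph.dist_eq_one_iff_adj.mpr h

/-- chain lemma, right version. -/
lemma interval_trans_right (hc : G.Connected) {u v b z : V}
    (hz : z ∈ interval G u v) (hv : v ∈ interval G u b) :
    z ∈ interval G u b ∧ v ∈ interval G z b := by
  rw [mem_interval] at hz hv ⊢
  have t1 : G.dist z b ≤ G.dist z v + G.dist v b := hc.dist_triangle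
  have t2 : G.dist u b ≤ G.dist u z + G.dist z b := hc.dist_triangle
  constructor
  · omega
  · rw [mem_interval]; omega

/-- chain lemma, left version. -/
lemma interval_trans_left (hc : G.Connected) {a u v z : V}
    (hz : z ∈ interval G u v) (hu : u ∈ interval G a v) :
    z ∈ interval G a v ∧ u ∈ interval G a z := by
  rw [interval_comm] at hz hu ⊢
  have h := interval_trans_right hc hz hu
  exact ⟨h.1, interval_comm.mpr h.2⟩

section Median

variable (hG : IsMedianGraph G)
noncomputable def med (x y z : V) : V := (hG.2 x y z).exists.choose
include hG

lemma med_spec (x y z : V) :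
    med hG x y z ∈ interval G x y ∧ med hG x y z ∈ interval G y z ∧
      med hG x y z ∈ interval G x z :=
  (hG.2 x y z).exists.choose_spec

lemma med_unique {x y z m : V}
    (h : m ∈ interval G x y ∧ m ∈ interval G y z ∧ m ∈ interval G x z) :
    m = med hG x y z := by
  have h2 := (hG.2 x y z).unique h (med_spec hG x y z)
  exact h2

/-- M1 : for an edge x~y, every vertex has different distances to x and y. -/
lemma adj_dist_ne {x y : V} (hxy : G.Adj x y) (w : V) : G.dist w x ≠ G.dist w y := by
  intro heq
  have hc := hG.1
  obtain ⟨h1, h2, h3⟩ := med_spec hG x y w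
  rw [mem_interval] at h1 h2 h3
  rw [dist_eq_one_of_adj hxy] at h1
  set m := med hG x y w with hm
  have cxw : G.dist x w = G.dist w x := SimpleGraph.dist_comm
  have cyw : G.dist y w = G.dist w y := SimpleGraph.dist_comm
  have c1 : G.dist x m = 0 ∨ G.dist m y = 0 := by omega
  rcases c1 with h | h
  · have hx : x = m := hc.dist_eq_zero_iff.mp h
    have e1 : G.dist y m = 1 := by
      rw [← hx, SimpleGraph.dist_comm]; exact dist_eq_one_of_adj hxy
    have e2 : G.dist m w = G.dist w x := by rw [← hx]; exact cxw
    omega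
  · have hy : m = y := hc.dist_eq_zero_iff.mp h
    have e1 : G.dist x m = 1 := by rw [hy]; exact dist_eq_one_of_adj hxy
    have e2 : G.dist m w = G.dist w y := by rw [hy]; exact cyw
    omega

/-- M1 corollary: distances to the ends of an edge differ by exactly one. -/
lemma adj_dist_cases (hxy : G.Adj x y) (w : V) :
    G.dist w y = G.dist w x + 1 ∨ G.dist w x = G.dist w y + 1 := by
  have hne := adj_dist_ne hG hxy w
  have h1 : G.dist w y ≤ G.dist w x + G.dist x y := hG.1.dist_triangle
  have h2 : G.dist w x ≤ G.dist w y + G.dist y x := hG.1.dist_triangle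
  rw [dist_eq_one_of_adj hxy] at h1
  rw [dist_eq_one_of_adj hxy.symm] at h2
  omega

/-- M2 : no K_{2,3}: two distinct vertices cannot have three distinct common
neighbours. -/
lemma no_K23 {u v w₁ w₂ w₃ : V} (huv : u ≠ v)
    (h12 : w₁ ≠ w₂) (h13 : w₁ ≠ w₃) (h23 : w₂ ≠ w₃)
    (hu1 : G.Adj u w₁) (hu2 : G.Adj u w₂) (hu3 : G.Adj u w₃)
    (hv1 : G.Adj v w₁) (hv2 : G.Adj v w₂) (hv3 : G.Adj v w₃) : False := by
  have hc := hG.1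
  -- pairwise distances between the wᵢ are 2
  have hdw : ∀ a b : V, a ≠ b → G.Adj u a → G.Adj u b → G.Adj v a → G.Adj v b →
      G.dist a b = 2 := by
    intro a b hab hua hub hva hvb
    have hne : ¬ G.Adj a b := by
      intro h
      exact adj_dist_ne hG h u
        (by rw [dist_eq_one_of_adj hua, dist_eq_one_of_adj hub])
    have h1 : G.dist a b ≤ G.dist a u + G.dist u b := hc.dist_triangle
    rw [dist_eq_one_of_adj hua.symm, dist_eq_one_of_adj hub] at h1
    have h0 : G.dist a b ≠ 0 := fun h0 => hab (hc.dist_eq_zero_iff.mp h0)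
    have h1' : G.dist a b ≠ 1 := fun h1' => hne (SimpleGraph.dist_eq_one_iff_adj.mp h1')
    omega
  have d12 := hdw w₁ w₂ h12 hu1 hu2 hv1 hv2
  have d13 := hdw w₁ w₃ h13 hu1 hu3 hv1 hv3
  have d23 := hdw w₂ w₃ h23 hu2 hu3 hv2 hv3
  have hmed : ∀ t : V, G.Adj t w₁ → G.Adj t w₂ → G.Adj t w₃ → t = med hG w₁ w₂ w₃ := by
    intro t h1 h2 h3
    apply med_unique
    have e1 : G.dist w₁ t = 1 := by
      rw [SimpleGraph.dist_comm]; exact dist_eq_one_of_adj h1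
    have e2 : G.dist w₂ t = 1 := by
      rw [SimpleGraph.dist_comm]; exact dist_eq_one_of_adj h2
    refine ⟨?_, ?_, ?_⟩ <;> rw [mem_interval]
    · rw [e1, dist_eq_one_of_adj h2, d12]
    · rw [e2, dist_eq_one_of_adj h3, d23]
    · rw [e1, dist_eq_one_of_adj h3, d13]
  have h1 := hmed u hu1 hu2 hu3
  have h2 := hmed v hv1 hv2 hv3
  exact huv (h1.trans h2.symm)

/-- M3 : quadrangle-type lemma. -/
lemma quad {u₁ u₂ v : V} (h12 : G.dist u₁ u₂ = 2) (hk : G.dist u₁ v = G.dist u₂ v) :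
    ∃ t, G.Adj u₁ t ∧ G.Adj u₂ t ∧ G.dist t v + 1 = G.dist u₁ v := by
  have hc := hG.1
  obtain ⟨h1, h2, h3⟩ := med_spec hG u₁ u₂ v
  rw [mem_interval] at h1 h2 h3
  set m := med hG u₁ u₂ v with hm
  rw [h12] at h1
  have c1 : G.dist u₂ m = G.dist m u₂ := SimpleGraph.dist_comm
  have hm1 : G.dist u₁ m ≠ 0 := by
    intro h
    have hx : u₁ = m := hc.dist_eq_zero_iff.mp h
    rw [← hx] at h2
    have h21 : G.dist u₂ u₁ = 2 := by rw [SimpleGraph.dist_comm]; exact h12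
    omega
  have hm2 : G.dist m u₂ ≠ 0 := by
    intro h
    have hx : m = u₂ := hc.dist_eq_zero_iff.mp h
    rw [hx] at h3
    omega
  have e1 : G.dist u₁ m = 1 := by omega
  have e2 : G.dist m u₂ = 1 := by omega
  refine ⟨m, SimpleGraph.dist_eq_one_iff_adj.mp e1, ?_, ?_⟩
  · have e3 : G.dist u₂ m = 1 := by omega
    exact SimpleGraph.dist_eq_one_iff_adj.mp e3
  · omega

end Median
-- ===================== Part 2 : convexity =====================

lemma dc (G : SimpleGraph V) (u v : V) : G.dist u v = G.dist v u := SimpleGraph.dist_comm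

lemma exists_step (hc : G.Connected) {a z : V} (h : G.dist a z ≠ 0) :
    ∃ b, G.Adj a b ∧ G.dist b z + 1 = G.dist a z ∧ b ∈ interval G a z := by
  obtain ⟨w, hw⟩ := hc.exists_walk_length_eq_dist a z
  cases w with
  | nil => rw [SimpleGraph.Walk.length_nil] at hw; omega
  | @cons _ b _ hadj w' =>
    rw [SimpleGraph.Walk.length_cons] at hw
    have h1 : G.dist b z ≤ w'.length := SimpleGraph.dist_le w'
    have h2 : G.dist a z ≤ G.dist a b + G.dist b z := hc.dist_triangle
    rw [dist_eq_one_of_adj hadj] at h2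
    have h3 : G.dist b z + 1 = G.dist a z := by omega
    exact ⟨b, hadj, h3, by rw [mem_interval, dist_eq_one_of_adj hadj]; omega⟩

/-- The halfspace determined by an (oriented) edge. -/
def gside (G : SimpleGraph V) (x y : V) : Set V := {w | G.dist w y < G.dist w x}

lemma mem_gside {x y w : V} : w ∈ gside G x y ↔ G.dist w y < G.dist w x := Iff.rfl

section Convexity

variable (hG : IsMedianGraph G)
include hG

lemma mem_gside' {x y : V} (hxy : G.Adj x y) (w : V) :
    w ∈ gside G x y ↔ G.dist w x = G.dist w y + 1 := by
  rcases adj_dist_cases hG hxy w with h | h <;>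
    (rw [mem_gside]; omega)

lemma notMem_gside {x y : V} (hxy : G.Adj x y) (w : V) :
    w ∉ gside G x y ↔ G.dist w y = G.dist w x + 1 := by
  rcases adj_dist_cases hG hxy w with h | h <;>
    (rw [mem_gside]; constructor <;> intro <;> omega)

lemma gside_base2 {x y : V} (hxy : G.Adj x y) {c₁ c₂ z : V}
    (h1 : c₁ ∈ gside G x y) (h2 : c₂ ∈ gside G x y)
    (a1 : G.Adj c₁ z) (a2 : G.Adj z c₂) (h12 : G.dist c₁ c₂ = 2) :
    z ∈ gside G x y := by
  have hc := hG.1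
  by_contra hz
  rw [notMem_gside hG hxy] at hz
  rw [mem_gside' hG hxy] at h1 h2
  have czx := dc G z x
  have czy := dc G z y
  have cc1x := dc G c₁ x
  have cc1y := dc G c₁ y
  have cc2x := dc G c₂ x
  have cc2y := dc G c₂ y
  have k1 : G.dist z x + 1 = G.dist c₁ x := by
    rcases adj_dist_cases hG a1 x with h | h <;>
      rcases adj_dist_cases hG a1 y with h' | h' <;> omega
  have k2 : G.dist z y = G.dist c₁ y + 1 := by
    rcases adj_dist_cases hG a1 y with h' | h' <;> omega
  have k3 : G.dist z x + 1 = G.dist c₂ x := by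
    rcases adj_dist_cases hG a2.symm x with h | h <;>
      rcases adj_dist_cases hG a2.symm y with h' | h' <;> omega
  have k4 : G.dist z y = G.dist c₂ y + 1 := by
    rcases adj_dist_cases hG a2.symm y with h' | h' <;> omega
  -- z is the median of (c₁, c₂, x)
  have hzmed : z = med hG c₁ c₂ x := by
    apply med_unique
    refine ⟨?_, ?_, ?_⟩ <;> rw [mem_interval]
    · rw [dist_eq_one_of_adj a1, dist_eq_one_of_adj a2, h12]
    · have e := dist_eq_one_of_adj a2
      have cc := dc G c₂ z
      omega
    · have e := dist_eq_one_of_adj a1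
      omega
  -- the median of (c₁, c₂, y)
  obtain ⟨m1, m2, m3⟩ := med_spec hG c₁ c₂ y
  set m := med hG c₁ c₂ y with hm
  rw [mem_interval] at m1 m2 m3
  rw [h12] at m1
  have cmy := dc G m y
  have cmx := dc G m x
  have cmc2 := dc G m c₂
  have hmc1 : G.dist c₁ m ≠ 0 := by
    intro h0
    have hcm : c₁ = m := hc.dist_eq_zero_iff.mp h0
    have e₁ : G.dist c₂ m = 2 := by rw [← hcm, dc G c₂ c₁]; exact h12
    have e₂ : G.dist m y = G.dist c₁ y := by rw [← hcm]
    omega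
  have hmc2 : G.dist m c₂ ≠ 0 := by
    intro h0
    have hcm : m = c₂ := hc.dist_eq_zero_iff.mp h0
    have e₂ : G.dist m y = G.dist c₂ y := by rw [hcm]
    omega
  have e1 : G.dist c₁ m = 1 := by omega
  have e2 : G.dist m c₂ = 1 := by omega
  have e3 : G.dist m y + 1 = G.dist c₁ y := by omega
  have e4 : G.dist m x = G.dist c₁ y := by
    have cxm := dc G x m
    rcases adj_dist_cases hG (SimpleGraph.dist_eq_one_iff_adj.mp e1) x with q1 | q1 <;>
      rcases adj_dist_cases hG hxy m with q2 | q2 <;> omega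
  have hmmed : m = med hG c₁ c₂ x := by
    apply med_unique
    refine ⟨?_, ?_, ?_⟩ <;> rw [mem_interval]
    · rw [h12]; omega
    · omega
    · omega
  have hmz : m = z := hmmed.trans hzmed.symm
  rw [hmz] at e3
  omega

lemma gside_onestep {x y : V} (hxy : G.Adj x y) :
    ∀ k : ℕ, ∀ a b z : V, G.dist z b = k → a ∈ gside G x y → b ∈ gside G x y →
      G.Adj a z → z ∈ interval G a b → z ∈ gside G x y := by
  have hc := hG.1
  intro k
  induction k using Nat.strong_induction_on with
  | _ k IH =>
    intro a b z hk ha hb haz hz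
    rcases Nat.eq_zero_or_pos k with h0 | hkpos
    · subst h0
      have : z = b := hc.dist_eq_zero_iff.mp hk
      rw [this]; exact hb
    by_contra hzs
    rw [notMem_gside hG hxy] at hzs
    rw [mem_gside' hG hxy] at ha hb
    rw [mem_interval] at hz
    rw [dist_eq_one_of_adj haz] at hz
    have cax := dc G a x
    have cay := dc G a y
    have czx := dc G z x
    have czy := dc G z y
    have cab := dc G a b
    have cbx := dc G b x
    have cby := dc G b y
    have cbz := dc G b z
    have k1 : G.dist z x + 1 = G.dist a x := by
      rcases adj_dist_cases hG haz x with h | h <;>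
        rcases adj_dist_cases hG haz y with h' | h' <;> omega
    have k2 : G.dist z y = G.dist a y + 1 := by
      rcases adj_dist_cases hG haz y with h' | h' <;> omega
    obtain ⟨m1, m2, m3⟩ := med_spec hG z b y
    set m := med hG z b y with hm
    rw [mem_interval] at m1 m2 m3
    have hmz : G.dist z m ≠ 0 := by
      intro h0
      have hzm : z = m := hc.dist_eq_zero_iff.mp h0
      rw [← hzm] at m2
      have t1 : G.dist b x ≤ G.dist b z + G.dist z x := hc.dist_triangle
      omega
    obtain ⟨z', hadj', hstep', hz'zm⟩ := exists_step hc hmz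
    have hz'zb : z' ∈ interval G z b ∧ m ∈ interval G z' b :=
      interval_trans_right hc hz'zm (by rw [mem_interval]; exact m1)
    have hz'zy : z' ∈ interval G z y ∧ m ∈ interval G z' y :=
      interval_trans_right hc hz'zm (by rw [mem_interval]; exact m3)
    have ezz' : G.dist z z' = 1 := dist_eq_one_of_adj hadj'
    have d1 : G.dist z' b + 1 = G.dist z b := by
      have h9 := hz'zb.1; rw [mem_interval] at h9
      omega
    have d2 : G.dist z' y + 1 = G.dist z y := by
      have h9 := hz'zy.1; rw [mem_interval] at h9
      omega
    have hne : a ≠ z' := by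
      intro h
      rw [← h] at d1
      omega
    have hdist2 : G.dist a z' = 2 := by
      have t1 : G.dist a z' ≤ G.dist a z + G.dist z z' := hc.dist_triangle
      rw [dist_eq_one_of_adj haz, ezz'] at t1
      have t0 : G.dist a z' ≠ 0 := fun h => hne (hc.dist_eq_zero_iff.mp h)
      have t11 : G.dist a z' ≠ 1 := by
        intro h1
        have hadj2 : G.Adj a z' := SimpleGraph.dist_eq_one_iff_adj.mp h1
        have hne2 := adj_dist_ne hG hadj2 y
        have cya := dc G y a
        have cyz' := dc G y z'
        omega
      omega
    have hay : G.dist a y = G.dist z' y := by omega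
    obtain ⟨t, hta, htz', htb⟩ := quad hG hdist2 hay
    have ctx := dc G t x
    have cty := dc G t y
    have cxt := dc G x t
    have htx : G.dist t x = G.dist t y + 1 := by
      rcases adj_dist_cases hG hta x with q1 | q1 <;>
        rcases adj_dist_cases hG hxy t with q2 | q2 <;> omega
    have hts : t ∈ gside G x y := by rw [mem_gside]; omega
    have ctz' := dc G t z'
    have etz' : G.dist z' t = 1 := dist_eq_one_of_adj htz'
    have eat : G.dist a t = 1 := dist_eq_one_of_adj hta
    have htbd : G.dist t b = G.dist z' b + 1 := by
      have t1 : G.dist t b ≤ G.dist t z' + G.dist z' b := hc.dist_triangle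
      have t2 : G.dist a b ≤ G.dist a t + G.dist t b := hc.dist_triangle
      omega
    have hz'tb : z' ∈ interval G t b := by
      rw [mem_interval]
      omega
    have hz's : z' ∈ gside G x y := by
      refine IH (G.dist z' b) (by omega) t b z' rfl hts ?_ htz'.symm hz'tb
      rw [mem_gside]; omega
    have hfin := gside_base2 hG hxy (x := x) (y := y)
      (by rw [mem_gside]; omega : a ∈ gside G x y) hz's haz hadj' hdist2
    rw [mem_gside] at hfin
    omega

lemma gside_convex {x y : V} (hxy : G.Adj x y) : GraphConvex G (gside G x y) := by
  have hc := hG.1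
  intro a ha b hb z hz
  generalize hj : G.dist a z = j at *
  induction j using Nat.strong_induction_on generalizing a with
  | _ j IH =>
    rcases Nat.eq_zero_or_pos j with h0 | hjpos
    · subst h0
      have : a = z := hc.dist_eq_zero_iff.mp hj
      rw [← this]; exact ha
    have hz0 : G.dist a z ≠ 0 := by omega
    obtain ⟨a₁, hadj, hstep, ha₁az⟩ := exists_step hc hz0
    have htr := interval_trans_right hc ha₁az hz
    have ha₁ : a₁ ∈ gside G x y :=
      gside_onestep hG hxy (G.dist a₁ b) a b a₁ rfl ha hb hadj htr.1
    exact IH (G.dist a₁ z) (by omega) a₁ ha₁ htr.2 rfl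

end Convexity
-- ===================== Part 3 : interval convexity =====================

lemma interval_mono_left (hc : G.Connected) {a b u z : V}
    (hz : z ∈ interval G a u) (hu : u ∈ interval G a b) : z ∈ interval G a b :=
  (interval_trans_right hc hz hu).1

lemma interval_mono_right (hc : G.Connected) {a b u z : V}
    (hz : z ∈ interval G u b) (hu : u ∈ interval G a b) : z ∈ interval G a b := by
  rw [interval_comm]
  exact (interval_trans_right hc (interval_comm.mp hz) (interval_comm.mp hu)).1

section IntConvexity

variable (hG : IsMedianGraph G)
include hG

lemma interval_base2 {a b u v z : V} (hu : u ∈ interval G a b) (hv : v ∈ interval G a b)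
    (huv : G.dist u v = 2) (a1 : G.Adj u z) (a2 : G.Adj z v) : z ∈ interval G a b := by
  have hc := hG.1
  by_contra hzn
  have huI := hu
  have hvI := hv
  rw [mem_interval] at hu hv
  have euz : G.dist u z = 1 := dist_eq_one_of_adj a1
  have ezv : G.dist z v = 1 := dist_eq_one_of_adj a2
  have czu := dc G z u
  have czv := dc G z v
  have cau := dc G a u
  have cav := dc G a v
  have caz := dc G a z
  have cbu := dc G b u
  have cbv := dc G b v
  have cbz := dc G b z
  -- exclusions
  have exa : ∀ w : V, G.Adj w z → w ∈ interval G a b → G.dist w b = G.dist z b + 1 →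
      G.dist a z + 1 ≠ G.dist a w := by
    intro w hw hwI h hhh
    apply hzn
    have hzw : z ∈ interval G a w := by
      rw [mem_interval, dc G z w, dist_eq_one_of_adj hw]
      omega
    exact interval_mono_left hc hzw hwI
  have exb : ∀ w : V, G.Adj w z → w ∈ interval G a b → G.dist z b + 1 ≠ G.dist w b := by
    intro w hw hwI hhh
    apply hzn
    have hzw : z ∈ interval G w b := by
      rw [mem_interval, dist_eq_one_of_adj hw]
      omega
    exact interval_mono_right hc hzw hwI
  have ka : G.dist a z = G.dist a u + 1 := by
    rcases adj_dist_cases hG a1 a with q | q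
    · omega
    · exfalso
      have hbz : G.dist u b = G.dist z b + 1 ∨ G.dist z b = G.dist u b + 1 := by
        rcases adj_dist_cases hG a1 b with q2 | q2 <;> omega
      rcases hbz with q2 | q2
      · exact exb u a1 huI (by omega)
      · -- z is closer to neither? then dist a z +1 = dist a u means z ∈ I(a,u)... here q : dist a u = dist a z + 1
        -- that means z ∈ I(a,u)? no: a-z-u : dist a z + dist z u = dist a z + 1 = dist a u ✓
        apply hzn
        have hzw : z ∈ interval G a u := by rw [mem_interval]; omega
        exact interval_mono_left hc hzw huI
  have kb : G.dist z b = G.dist u b + 1 := by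
    rcases adj_dist_cases hG a1 b with q | q
    · omega
    · exact (exb u a1 huI (by omega : G.dist z b + 1 = G.dist u b)).elim
  have ka' : G.dist a z = G.dist a v + 1 := by
    rcases adj_dist_cases hG a2.symm a with q | q
    · omega
    · exfalso
      apply hzn
      have hzw : z ∈ interval G a v := by rw [mem_interval]; omega
      exact interval_mono_left hc hzw hvI
  have kb' : G.dist z b = G.dist v b + 1 := by
    rcases adj_dist_cases hG a2.symm b with q | q
    · omega
    · exact (exb v a2.symm hvI (by omega : G.dist z b + 1 = G.dist v b)).elim
  -- medians
  obtain ⟨m1, m2, m3⟩ := med_spec hG a u v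
  set m := med hG a u v with hm
  rw [mem_interval] at m1 m2 m3
  rw [huv] at m2
  have cmu := dc G m u
  have cmv := dc G m v
  have cum := dc G u m
  have em : G.dist m u = 1 ∧ G.dist m v = 1 := by constructor <;> omega
  obtain ⟨m1', m2', m3'⟩ := med_spec hG b u v
  set m' := med hG b u v with hm'
  rw [mem_interval] at m1' m2' m3'
  rw [huv] at m2'
  have cmu' := dc G m' u
  have cmv' := dc G m' v
  have cum' := dc G u m'
  have em' : G.dist m' u = 1 ∧ G.dist m' v = 1 := by constructor <;> omega
  have hzm : z ≠ m := by
    intro h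
    rw [← h] at m1
    omega
  have hzm' : z ≠ m' := by
    intro h
    rw [← h] at m1'
    omega
  by_cases hmm : m = m'
  · have t1 : G.dist a b ≤ G.dist a m + G.dist m b := hc.dist_triangle
    have cbm' := dc G b m'
    rw [← hmm] at m1' cbm'
    omega
  · refine no_K23 hG (show u ≠ v by intro h; rw [h] at huv; simp [SimpleGraph.dist_self] at huv)
      (hzm) (hzm') (hmm) a1 ?_ ?_ a2.symm ?_ ?_
    · exact SimpleGraph.dist_eq_one_iff_adj.mp (by omega : G.dist u m = 1)
    · exact SimpleGraph.dist_eq_one_iff_adj.mp (by omega : G.dist u m' = 1)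
    · exact SimpleGraph.dist_eq_one_iff_adj.mp (by omega : G.dist v m = 1)
    · exact SimpleGraph.dist_eq_one_iff_adj.mp (by omega : G.dist v m' = 1)

lemma interval_onestep {a b : V} :
    ∀ k : ℕ, ∀ u v z : V, G.dist z v = k → u ∈ interval G a b → v ∈ interval G a b →
      G.Adj u z → z ∈ interval G u v → z ∈ interval G a b := by
  have hc := hG.1
  intro k
  induction k using Nat.strong_induction_on with
  | _ k IH =>
    intro u v z hk hu hv huz hz
    rcases Nat.eq_zero_or_pos k with h0 | hkpos
    · have : z = v := hc.dist_eq_zero_iff.mp (by omega)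
      rw [this]; exact hv
    by_contra hzn
    have huI := hu
    have hvI := hv
    rw [mem_interval] at hu hv hz
    rw [dist_eq_one_of_adj huz] at hz
    have euz : G.dist u z = 1 := dist_eq_one_of_adj huz
    have cau := dc G a u
    have caz := dc G a z
    have cbu := dc G b u
    have cbz := dc G b z
    have czu := dc G z u
    -- exclusions give the "bad case" distances
    have ka : G.dist a z = G.dist a u + 1 := by
      rcases adj_dist_cases hG huz a with q | q
      · omega
      · exfalso
        apply hzn
        have hzw : z ∈ interval G a u := by rw [mem_interval]; omega
        exact interval_mono_left hc hzw huI
    have kb : G.dist z b = G.dist u b + 1 := by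
      rcases adj_dist_cases hG huz b with q | q
      · omega
      · exfalso
        apply hzn
        have hzw : z ∈ interval G u b := by
          rw [mem_interval, dist_eq_one_of_adj huz]; omega
        exact interval_mono_right hc hzw huI
    -- median towards v and b
    obtain ⟨m1, m2, m3⟩ := med_spec hG z v b
    set m := med hG z v b with hm
    rw [mem_interval] at m1 m2 m3
    have hmz : G.dist z m ≠ 0 := by
      intro h0
      have hzm : z = m := hc.dist_eq_zero_iff.mp h0
      rw [← hzm] at m2
      apply hzn
      have hzvb : z ∈ interval G v b := by rw [mem_interval]; omega
      exact interval_mono_right hc (interval_comm.mp (interval_comm.mpr hzvb)) hvI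
    obtain ⟨z', hadj', hstep', hz'zm⟩ := exists_step hc hmz
    have hz'zv : z' ∈ interval G z v ∧ m ∈ interval G z' v :=
      interval_trans_right hc hz'zm (by rw [mem_interval]; exact m1)
    have hz'zb : z' ∈ interval G z b ∧ m ∈ interval G z' b :=
      interval_trans_right hc hz'zm (by rw [mem_interval]; exact m3)
    have ezz' : G.dist z z' = 1 := dist_eq_one_of_adj hadj'
    have d1 : G.dist z' v + 1 = G.dist z v := by
      have h9 := hz'zv.1; rw [mem_interval] at h9; omega
    have d2 : G.dist z' b + 1 = G.dist z b := by
      have h9 := hz'zb.1; rw [mem_interval] at h9; omega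
    have hne : u ≠ z' := by
      intro h
      rw [← h] at d1
      omega
    have hdist2 : G.dist u z' = 2 := by
      have t1 : G.dist u z' ≤ G.dist u z + G.dist z z' := hc.dist_triangle
      rw [dist_eq_one_of_adj huz, ezz'] at t1
      have t0 : G.dist u z' ≠ 0 := fun h => hne (hc.dist_eq_zero_iff.mp h)
      have t11 : G.dist u z' ≠ 1 := by
        intro h1
        have hadj2 : G.Adj u z' := SimpleGraph.dist_eq_one_iff_adj.mp h1
        have hne2 := adj_dist_ne hG hadj2 b
        have cbz' := dc G b z'
        omega
      omega
    have hub : G.dist u b = G.dist z' b := by omega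
    obtain ⟨t, htu, htz', htb⟩ := quad hG hdist2 hub
    have eut : G.dist u t = 1 := dist_eq_one_of_adj htu
    have etz' : G.dist z' t = 1 := dist_eq_one_of_adj htz'
    have ctz' := dc G t z'
    have ctb := dc G t b
    -- t ∈ I(a,b)
    have htI : t ∈ interval G a b := by
      have htub : t ∈ interval G u b := by
        rw [mem_interval, eut]; omega
      exact interval_mono_right hc htub huI
    -- z' ∈ I(t,v)
    have htv : G.dist t v = G.dist z' v + 1 := by
      have t1 : G.dist t v ≤ G.dist t z' + G.dist z' v := hc.dist_triangle
      have t2 : G.dist u v ≤ G.dist u t + G.dist t v := hc.dist_triangle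
      omega
    have hz'tv : z' ∈ interval G t v := by
      rw [mem_interval]; omega
    have hz'I : z' ∈ interval G a b :=
      IH (G.dist z' v) (by omega) t v z' rfl htI hvI htz'.symm hz'tv
    exact hzn (interval_base2 hG huI hz'I hdist2 huz hadj')

lemma interval_convex (a b : V) : GraphConvex G (interval G a b) := by
  have hc := hG.1
  intro u hu v hv z hz
  generalize hj : G.dist u z = j at *
  induction j using Nat.strong_induction_on generalizing u with
  | _ j IH =>
    rcases Nat.eq_zero_or_pos j with h0 | hjpos
    · have : u = z := hc.dist_eq_zero_iff.mp (by omega)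
      rw [← this]; exact hu
    obtain ⟨u₁, hadj, hstep, hu₁uz⟩ := exists_step hc (show G.dist u z ≠ 0 by omega)
    have htr := interval_trans_right hc hu₁uz hz
    have hu₁ : u₁ ∈ interval G a b :=
      interval_onestep hG (G.dist u₁ v) u v u₁ rfl hu hv hadj htr.1
    exact IH (G.dist u₁ z) (by omega) u₁ hu₁ htr.2 rfl

end IntConvexity
-- ===================== Part 4 : geodesic, walls, counting =====================

attribute [local instance] Classical.propDecidable

lemma exists_geo (hc : G.Connected) (p q : V) :
    ∃ vtx : ℕ → V, vtx 0 = p ∧ vtx (G.dist p q) = q ∧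
      (∀ i < G.dist p q, G.Adj (vtx i) (vtx (i+1))) ∧
      (∀ i ≤ G.dist p q, G.dist p (vtx i) = i ∧ G.dist (vtx i) q = G.dist p q - i) := by
  obtain ⟨w, hw⟩ := hc.exists_walk_length_eq_dist p q
  set n := G.dist p q with hn
  refine ⟨w.getVert, w.getVert_zero, by rw [← hw]; exact w.getVert_length, ?_, ?_⟩
  · intro i hi
    exact w.adj_getVert_succ (by omega)
  · have ub1 : ∀ i ≤ n, G.dist p (w.getVert i) ≤ i := by
      intro i hi
      induction i with
      | zero => rw [w.getVert_zero]; simp [SimpleGraph.dist_self]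
      | succ m IH =>
        have t1 : G.dist p (w.getVert (m+1)) ≤
            G.dist p (w.getVert m) + G.dist (w.getVert m) (w.getVert (m+1)) :=
          hc.dist_triangle
        have t2 := dist_eq_one_of_adj (w.adj_getVert_succ (by omega : m < w.length))
        have := IH (by omega)
        omega
    have ub2 : ∀ j ≤ n, G.dist (w.getVert (n - j)) q ≤ j := by
      intro j hj
      induction j with
      | zero =>
        have : w.getVert (n - 0) = q := by
          simp only [Nat.sub_zero]
          rw [← hw]; exact w.getVert_length
        rw [this]; simp [SimpleGraph.dist_self]
      | succ m IH =>
        have hi : n - (m+1) < w.length := by omega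
        have t2 := dist_eq_one_of_adj (w.adj_getVert_succ hi)
        have hidx : n - (m+1) + 1 = n - m := by omega
        have t1 : G.dist (w.getVert (n - (m+1))) q ≤
            G.dist (w.getVert (n - (m+1))) (w.getVert (n - (m+1) + 1)) +
            G.dist (w.getVert (n - (m+1) + 1)) q := hc.dist_triangle
        rw [hidx] at t1 t2
        have := IH (by omega)
        omega
    intro i hi
    have h1 := ub1 i hi
    have h2 := ub2 (n - i) (by omega)
    have hidx : n - (n - i) = i := by omega
    rw [hidx] at h2
    have t1 : n ≤ G.dist p (w.getVert i) + G.dist (w.getVert i) q := by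
      rw [hn]; exact hc.dist_triangle
    omega

section Main

variable (hG : IsMedianGraph G) {p q : V} {n : ℕ} {vtx : ℕ → V}

/-- Wall `i` (for `i < n`): the `q`-side halfspace of the edge `vtx i ~ vtx (i+1)`. -/
def wside (G : SimpleGraph V) (vtx : ℕ → V) (i : ℕ) : Set V := gside G (vtx i) (vtx (i+1))

variable (h0 : vtx 0 = p) (hn : vtx n = q) (hnd : G.dist p q = n)
  (hadj : ∀ i < n, G.Adj (vtx i) (vtx (i+1)))
  (hdp : ∀ i ≤ n, G.dist p (vtx i) = i ∧ G.dist (vtx i) q = n - i)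

include hG h0 hn hnd hadj hdp

lemma vtx_dist : ∀ i ≤ n, ∀ j ≤ n, i ≤ j → G.dist (vtx i) (vtx j) = j - i := by
  intro i hi j hj hij
  have hub : ∀ k, i + k ≤ n → G.dist (vtx i) (vtx (i + k)) ≤ k := by
    intro k
    induction k with
    | zero => intro _; simp [SimpleGraph.dist_self]
    | succ m IH =>
      intro hk
      have t1 : G.dist (vtx i) (vtx (i+m+1)) ≤
          G.dist (vtx i) (vtx (i+m)) + G.dist (vtx (i+m)) (vtx (i+m+1)) := hG.1.dist_triangle
      have t2 := dist_eq_one_of_adj (hadj (i+m) (by omega))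
      have := IH (by omega)
      have hplus : i + (m+1) = i + m + 1 := by omega
      rw [hplus]
      omega
  have h1 := hub (j - i) (by omega)
  have hplus : i + (j - i) = j := by omega
  rw [hplus] at h1
  have t1 : G.dist p (vtx j) ≤ G.dist p (vtx i) + G.dist (vtx i) (vtx j) := hG.1.dist_triangle
  rw [(hdp i hi).1, (hdp j hj).1] at t1
  omega

lemma vtx_mem_wside : ∀ i < n, ∀ j ≤ n, (vtx j ∈ wside G vtx i ↔ i < j) := by
  intro i hi j hj
  rw [wside, mem_gside]
  rcases Nat.lt_or_ge i j with h | h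
  · have d1 : G.dist (vtx i) (vtx j) = j - i := vtx_dist hG h0 hn hnd hadj hdp i (by omega) j hj (by omega)
    have d2 : G.dist (vtx (i+1)) (vtx j) = j - (i+1) := by
      rcases Nat.lt_or_ge (i+1) j with h2 | h2
      · exact vtx_dist hG h0 hn hnd hadj hdp (i+1) (by omega) j hj (by omega)
      · have : i + 1 = j := by omega
        rw [this, SimpleGraph.dist_self]
        omega
    have c1 := dc G (vtx j) (vtx i)
    have c2 := dc G (vtx j) (vtx (i+1))
    constructor <;> intro <;> omega
  · have d1 : G.dist (vtx j) (vtx i) = i - j :=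
      vtx_dist hG h0 hn hnd hadj hdp j hj i (by omega) (by omega)
    have d2 : G.dist (vtx j) (vtx (i+1)) = i + 1 - j :=
      vtx_dist hG h0 hn hnd hadj hdp j hj (i+1) (by omega) (by omega)
    constructor <;> intro <;> omega

lemma p_notMem_wside : ∀ i < n, p ∉ wside G vtx i := by
  intro i hi hp
  rw [← h0] at hp
  have := (vtx_mem_wside hG h0 hn hnd hadj hdp i hi 0 (by omega)).mp hp
  omega

lemma q_mem_wside : ∀ i < n, q ∈ wside G vtx i := by
  intro i hi
  rw [← hn]
  exact (vtx_mem_wside hG h0 hn hnd hadj hdp i hi n (by omega)).mpr hi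

/-- Counting: the number of walls with `u` on the `q`-side equals `dist p u`. -/
lemma count_wside {u : V} (hu : u ∈ interval G p q) :
    ((Finset.range n).filter (fun i => u ∈ wside G vtx i)).card = G.dist p u := by
  have hc := hG.1
  have aux : ∀ m ≤ n, (G.dist u (vtx m) : ℤ) +
      2 * ((Finset.range m).filter (fun i => u ∈ wside G vtx i)).card
      = G.dist u p + m := by
    intro m hm
    induction m with
    | zero => rw [h0]; simp [dc G u p]
    | succ m IH =>
      have hedge := hadj m (by omega)
      have hmem : u ∈ wside G vtx m ∨ u ∉ wside G vtx m := em _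
      have hfil : (Finset.range (m+1)).filter (fun i => u ∈ wside G vtx i) =
          if u ∈ wside G vtx m
          then insert m ((Finset.range m).filter (fun i => u ∈ wside G vtx i))
          else (Finset.range m).filter (fun i => u ∈ wside G vtx i) := by
        rw [Finset.range_add_one, Finset.filter_insert]
      have hmn : m ∉ (Finset.range m).filter (fun i => u ∈ wside G vtx i) := by
        simp
      have IH' := IH (by omega)
      rcases hmem with hin | hout
      · have hd : G.dist u (vtx m) = G.dist u (vtx (m+1)) + 1 :=
          (mem_gside' hG hedge u).mp hin
        rw [hfil, if_pos hin, Finset.card_insert_of_notMem hmn]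
        push_cast
        omega
      · have hd : G.dist u (vtx (m+1)) = G.dist u (vtx m) + 1 :=
          (notMem_gside hG hedge u).mp hout
        rw [hfil, if_neg hout]
        omega
  have h1 := aux n (le_refl n)
  rw [hn] at h1
  rw [mem_interval] at hu
  have c1 := dc G u p
  have c2 := dc G u q
  omega

/-- Separation of two vertices by wall `i`. -/
def wsep (G : SimpleGraph V) (vtx : ℕ → V) (u v : V) (i : ℕ) : Prop :=
  (u ∈ wside G vtx i ∧ v ∉ wside G vtx i) ∨ (u ∉ wside G vtx i ∧ v ∈ wside G vtx i)

/-- Both sides of each wall are convex. -/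
lemma wside_convex (i : ℕ) (hi : i < n) : GraphConvex G (wside G vtx i) :=
  gside_convex hG (hadj i hi)

lemma wside_compl_convex (i : ℕ) (hi : i < n) :
    GraphConvex G {w | w ∉ wside G vtx i} := by
  have h := gside_convex hG (hadj i hi).symm
  have hrw : {w | w ∉ wside G vtx i} = gside G (vtx (i+1)) (vtx i) := by
    ext w
    simp only [Set.mem_setOf_eq, wside]
    have hd := adj_dist_cases hG (hadj i hi) w
    rw [notMem_gside hG (hadj i hi) w, mem_gside]
    rcases hd with h | h <;> (constructor <;> intro <;> omega)
  rw [hrw]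
  exact h

/-- Non-separating walls of a pair do not separate points of its interval. -/
lemma wsep_interval {a b z w' : V} (i : ℕ) (hi : i < n) (hab : ¬ wsep G vtx a b i)
    (hz : z ∈ interval G a b) (hw : w' ∈ interval G a b) : ¬ wsep G vtx z w' i := by
  rw [wsep] at hab ⊢
  by_cases ha : a ∈ wside G vtx i
  · have hb : b ∈ wside G vtx i := by tauto
    have h1 := wside_convex hG h0 hn hnd hadj hdp i hi a ha b hb hz
    have h2 := wside_convex hG h0 hn hnd hadj hdp i hi a ha b hb hw
    tauto
  · have hb : b ∉ wside G vtx i := by tauto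
    have h1 := wside_compl_convex hG h0 hn hnd hadj hdp i hi a ha b hb hz
    have h2 := wside_compl_convex hG h0 hn hnd hadj hdp i hi a ha b hb hw
    tauto

/-- F3 : distance inside the interval equals the number of separating walls. -/
lemma dist_eq_wsep_card {u v : V} (hu : u ∈ interval G p q) (hv : v ∈ interval G p q) :
    G.dist u v = ((Finset.range n).filter (wsep G vtx u v)).card := by
  have hc := hG.1
  obtain ⟨m1, m2, m3⟩ := med_spec hG p u v
  set m₀ := med hG p u v with hm₀
  have hm₀I : m₀ ∈ interval G p q := interval_mono_left hc m1 hu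
  -- u, v ∈ I(m₀, q)
  have hum : u ∈ interval G m₀ q := by
    rw [mem_interval] at m1 hu ⊢
    have t1 : G.dist m₀ q ≤ G.dist m₀ u + G.dist u q := hc.dist_triangle
    have t2 : G.dist p q ≤ G.dist p m₀ + G.dist m₀ q := hc.dist_triangle
    omega
  have hvm : v ∈ interval G m₀ q := by
    rw [mem_interval] at m3 hv ⊢
    have t1 : G.dist m₀ q ≤ G.dist m₀ v + G.dist v q := hc.dist_triangle
    have t2 : G.dist p q ≤ G.dist p m₀ + G.dist m₀ q := hc.dist_triangle
    omega
  set A := (Finset.range n).filter (fun i => u ∈ wside G vtx i) with hA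
  set B := (Finset.range n).filter (fun i => v ∈ wside G vtx i) with hB
  set C := (Finset.range n).filter (fun i => m₀ ∈ wside G vtx i) with hC
  have hCAB : C = A ∩ B := by
    ext i
    simp only [hA, hB, hC, Finset.mem_inter, Finset.mem_filter, Finset.mem_range]
    constructor
    · intro ⟨hi, hm⟩
      have hq := q_mem_wside hG h0 hn hnd hadj hdp i hi
      have hcvx := wside_convex hG h0 hn hnd hadj hdp i hi m₀ hm q hq
      exact ⟨⟨hi, hcvx hum⟩, hi, hcvx hvm⟩
    · intro ⟨⟨hi, hiu⟩, _, hiv⟩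
      have hcvx := wside_convex hG h0 hn hnd hadj hdp i hi u hiu v hiv
      exact ⟨hi, hcvx m2⟩
  have cardA : A.card = G.dist p u := count_wside hG h0 hn hnd hadj hdp hu
  have cardB : B.card = G.dist p v := count_wside hG h0 hn hnd hadj hdp hv
  have cardC : C.card = G.dist p m₀ := count_wside hG h0 hn hnd hadj hdp hm₀I
  have hsep : (Finset.range n).filter (wsep G vtx u v) = (A ∪ B) \ (A ∩ B) := by
    ext i
    simp only [hA, hB, Finset.mem_sdiff, Finset.mem_union, Finset.mem_inter,
      Finset.mem_filter, Finset.mem_range, wsep]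
    tauto
  rw [hsep]
  have hAB : (A ∩ B) ⊆ (A ∪ B) := (Finset.inter_subset_left).trans Finset.subset_union_left
  rw [Finset.card_sdiff_of_subset hAB]
  have hcup : (A ∪ B).card + (A ∩ B).card = A.card + B.card := Finset.card_union_add_card_inter A B
  rw [mem_interval] at m1 m2 m3
  have c1 := dc G m₀ u
  have c2 := dc G m₀ v
  rw [← hCAB] at *
  omega

end Main
-- ===================== Part 5a : Helly =====================

lemma convex_inter {A B : Set V} (hA : GraphConvex G A) (hB : GraphConvex G B) :
    GraphConvex G (A ∩ B) := by
  intro u hu v hv z hz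
  exact ⟨hA u hu.1 v hv.1 hz, hB u hu.2 v hv.2 hz⟩

section Helly
variable (hG : IsMedianGraph G)
include hG

lemma helly3 {A B C : Set V} (hA : GraphConvex G A) (hB : GraphConvex G B)
    (hC : GraphConvex G C) {ab ac bc : V}
    (hab : ab ∈ A ∩ B) (hac : ac ∈ A ∩ C) (hbc : bc ∈ B ∩ C) :
    ∃ z, z ∈ A ∧ z ∈ B ∧ z ∈ C := by
  obtain ⟨m1, m2, m3⟩ := med_spec hG ab ac bc
  exact ⟨med hG ab ac bc, hA ab hab.1 ac hac.1 m1,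
    hB ab hab.2 bc hbc.1 m3, hC ac hac.2 bc hbc.2 m2⟩

lemma helly4 {A B C D : Set V} (hA : GraphConvex G A) (hB : GraphConvex G B)
    (hC : GraphConvex G C) (hD : GraphConvex G D)
    (hab : ∃ z, z ∈ A ∧ z ∈ B) (hac : ∃ z, z ∈ A ∧ z ∈ C) (had : ∃ z, z ∈ A ∧ z ∈ D)
    (hbc : ∃ z, z ∈ B ∧ z ∈ C) (hbd : ∃ z, z ∈ B ∧ z ∈ D) (hcd : ∃ z, z ∈ C ∧ z ∈ D) :
    ∃ z, z ∈ A ∧ z ∈ B ∧ z ∈ C ∧ z ∈ D := by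
  obtain ⟨ab, h1⟩ := hab
  obtain ⟨ac, h2⟩ := hac
  obtain ⟨ad, h3⟩ := had
  obtain ⟨bc, h4⟩ := hbc
  obtain ⟨bd, h5⟩ := hbd
  obtain ⟨cd, h6⟩ := hcd
  -- first: (A∩B) meets C and D
  obtain ⟨abc, habc⟩ := helly3 hG hA hB hC ⟨h1.1, h1.2⟩ ⟨h2.1, h2.2⟩ ⟨h4.1, h4.2⟩
  obtain ⟨abd, habd⟩ := helly3 hG hA hB hD ⟨h1.1, h1.2⟩ ⟨h3.1, h3.2⟩ ⟨h5.1, h5.2⟩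
  obtain ⟨z, hz⟩ := helly3 hG (convex_inter hA hB) hC hD
    (show abc ∈ (A ∩ B) ∩ C from ⟨⟨habc.1, habc.2.1⟩, habc.2.2⟩)
    (show abd ∈ (A ∩ B) ∩ D from ⟨⟨habd.1, habd.2.1⟩, habd.2.2⟩)
    ⟨h6.1, h6.2⟩
  exact ⟨z, hz.1.1, hz.1.2, hz.2.1, hz.2.2⟩

lemma helly5 {A B C D E : Set V} (hA : GraphConvex G A) (hB : GraphConvex G B)
    (hC : GraphConvex G C) (hD : GraphConvex G D) (hE : GraphConvex G E)
    (hab : ∃ z, z ∈ A ∧ z ∈ B) (hac : ∃ z, z ∈ A ∧ z ∈ C) (had : ∃ z, z ∈ A ∧ z ∈ D)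
    (hae : ∃ z, z ∈ A ∧ z ∈ E)
    (hbc : ∃ z, z ∈ B ∧ z ∈ C) (hbd : ∃ z, z ∈ B ∧ z ∈ D) (hbe : ∃ z, z ∈ B ∧ z ∈ E)
    (hcd : ∃ z, z ∈ C ∧ z ∈ D) (hce : ∃ z, z ∈ C ∧ z ∈ E) (hde : ∃ z, z ∈ D ∧ z ∈ E) :
    ∃ z, z ∈ A ∧ z ∈ B ∧ z ∈ C ∧ z ∈ D ∧ z ∈ E := by
  obtain ⟨abc, h1⟩ := helly3 hG hA hB hC
    ⟨hab.choose_spec.1, hab.choose_spec.2⟩ ⟨hac.choose_spec.1, hac.choose_spec.2⟩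
    ⟨hbc.choose_spec.1, hbc.choose_spec.2⟩
  obtain ⟨abd, h2⟩ := helly3 hG hA hB hD
    ⟨hab.choose_spec.1, hab.choose_spec.2⟩ ⟨had.choose_spec.1, had.choose_spec.2⟩
    ⟨hbd.choose_spec.1, hbd.choose_spec.2⟩
  obtain ⟨abe, h3⟩ := helly3 hG hA hB hE
    ⟨hab.choose_spec.1, hab.choose_spec.2⟩ ⟨hae.choose_spec.1, hae.choose_spec.2⟩
    ⟨hbe.choose_spec.1, hbe.choose_spec.2⟩
  obtain ⟨z, hz⟩ := helly4 hG (convex_inter hA hB) hC hD hE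
    ⟨abc, ⟨h1.1, h1.2.1⟩, h1.2.2⟩ ⟨abd, ⟨h2.1, h2.2.1⟩, h2.2.2⟩
    ⟨abe, ⟨h3.1, h3.2.1⟩, h3.2.2⟩ hcd hce hde
  exact ⟨z, hz.1.1, hz.1.2, hz.2.1, hz.2.2.1, hz.2.2.2⟩

end Helly
-- ===================== Part 5b : cube-freeness kills 3 pairwise-crossing walls ==========

lemma fin2_cases : ∀ x : Fin 2, x = 0 ∨ x = 1 := by decide

lemma ham_eq_one_iff (ε δ : Fin 3 → Fin 2) :
    ((Finset.univ.filter fun t => ε t ≠ δ t).card = 1) ↔ (∃! t, ε t ≠ δ t) := by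
  rw [Finset.card_eq_one]
  constructor
  · rintro ⟨t, ht⟩
    have hmem : ∀ s, ε s ≠ δ s ↔ s ∈ ({t} : Finset (Fin 3)) := by
      intro s
      rw [← ht, Finset.mem_filter]
      simp
    refine ⟨t, (hmem t).mpr (Finset.mem_singleton_self t), fun s hs => ?_⟩
    simpa using (hmem s).mp hs
  · rintro ⟨t, ht, hu⟩
    refine ⟨t, ?_⟩
    ext s
    simp only [Finset.mem_filter, Finset.mem_univ, true_and, Finset.mem_singleton]
    exact ⟨fun h => hu s h, fun h => h ▸ ht⟩

lemma cube_base (hcf : CubeFree G) {c : (Fin 3 → Fin 2) → V}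
    (hdist : ∀ ε δ, G.dist (c ε) (c δ) = (Finset.univ.filter fun t => ε t ≠ δ t).card) :
    False := by
  apply hcf
  have hinj : Function.Injective c := by
    intro ε δ h
    have h0 : G.dist (c ε) (c δ) = 0 := by rw [h, SimpleGraph.dist_self]
    rw [hdist] at h0
    have hemp := Finset.card_eq_zero.mp h0
    funext t
    by_contra hne
    have : t ∈ (∅ : Finset (Fin 3)) :=
      hemp ▸ (Finset.mem_filter.mpr ⟨Finset.mem_univ t, hne⟩)
    simp at this
  refine ⟨⟨⟨c, hinj⟩, ?_⟩⟩
  intro ε δ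
  show G.Adj (c ε) (c δ) ↔ (cubeGraph 3).Adj ε δ
  rw [cubeGraph, SimpleGraph.fromRel_adj]
  rw [← SimpleGraph.dist_eq_one_iff_adj, hdist, ham_eq_one_iff]
  constructor
  · intro h
    refine ⟨?_, Or.inl h⟩
    obtain ⟨t, ht, _⟩ := h
    intro he; rw [he] at ht; exact ht rfl
  · rintro ⟨hne, h | h⟩
    · exact h
    · obtain ⟨t, ht, hu⟩ := h
      exact ⟨t, Ne.symm ht, fun s hs => hu s (Ne.symm hs)⟩

section Cube

variable (hG : IsMedianGraph G) {p q : V} {n : ℕ} {vtx : ℕ → V}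

/-- The `v`-side of wall `i`. -/
def eside (G : SimpleGraph V) (vtx : ℕ → V) (i : ℕ) (v : Fin 2) : Set V :=
  if v = 1 then wside G vtx i else {z | z ∉ wside G vtx i}

lemma mem_eside {i : ℕ} {v : Fin 2} {z : V} :
    z ∈ eside G vtx i v ↔ (z ∈ wside G vtx i ↔ v = 1) := by
  have h01 : ¬ ((0 : Fin 2) = 1) := by decide
  rcases fin2_cases v with h | h <;> subst h
  · rw [eside, if_neg (by decide)]
    simp only [Set.mem_setOf_eq]
    tauto
  · rw [eside, if_pos rfl]
    tauto

lemma med_eq_left (hG : IsMedianGraph G) (a b : V) : med hG a a b = a := by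
  symm
  apply med_unique
  refine ⟨?_, left_mem_interval a b, left_mem_interval a b⟩
  rw [mem_interval, SimpleGraph.dist_self]

lemma med_eq_right (hG : IsMedianGraph G) (a b : V) : med hG b a b = b := by
  symm
  apply med_unique
  refine ⟨left_mem_interval b a, right_mem_interval a b, ?_⟩
  simp [mem_interval, SimpleGraph.dist_self]

variable (h0 : vtx 0 = p) (hn : vtx n = q) (hnd : G.dist p q = n)
  (hadj : ∀ i < n, G.Adj (vtx i) (vtx (i+1)))
  (hdp : ∀ i ≤ n, G.dist p (vtx i) = i ∧ G.dist (vtx i) q = n - i)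

include hG h0 hn hnd hadj hdp

lemma eside_convex (i : ℕ) (hi : i < n) (v : Fin 2) : GraphConvex G (eside G vtx i v) := by
  rcases fin2_cases v with h | h <;> subst h
  · rw [eside, if_neg (by decide)]
    exact wside_compl_convex hG h0 hn hnd hadj hdp i hi
  · rw [eside, if_pos rfl]
    exact wside_convex hG h0 hn hnd hadj hdp i hi

lemma wside_trace_ne {x l : ℕ} (hx : x < n) (hl : l < n) (hne : x ≠ l)
    (heq : ∀ z : V, z ∈ wside G vtx x ↔ z ∈ wside G vtx l) : False := by
  rcases Nat.lt_or_ge x l with h | h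
  · have h1 : vtx (x+1) ∈ wside G vtx x :=
      (vtx_mem_wside hG h0 hn hnd hadj hdp x hx (x+1) (by omega)).mpr (by omega)
    have h2 : vtx (x+1) ∉ wside G vtx l := by
      intro hh
      have := (vtx_mem_wside hG h0 hn hnd hadj hdp l hl (x+1) (by omega)).mp hh
      omega
    exact h2 ((heq _).mp h1)
  · have hlx : l < x := by omega
    have h1 : vtx (l+1) ∈ wside G vtx l :=
      (vtx_mem_wside hG h0 hn hnd hadj hdp l hl (l+1) (by omega)).mpr (by omega)
    have h2 : vtx (l+1) ∉ wside G vtx x := by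
      intro hh
      have := (vtx_mem_wside hG h0 hn hnd hadj hdp x hx (l+1) (by omega)).mp hh
      omega
    exact h2 ((heq _).mpr h1)

lemma wside_trace_ne' {x l : ℕ} (hx : x < n) (hl : l < n)
    (heq : ∀ z : V, z ∈ wside G vtx x ↔ z ∉ wside G vtx l) : False := by
  have hj : max x l + 1 ≤ n := by omega
  have h1 : vtx (max x l + 1) ∈ wside G vtx x :=
    (vtx_mem_wside hG h0 hn hnd hadj hdp x hx _ hj).mpr (by omega)
  have h2 : vtx (max x l + 1) ∈ wside G vtx l :=
    (vtx_mem_wside hG h0 hn hnd hadj hdp l hl _ hj).mpr (by omega)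
  exact (heq _).mp h1 h2

lemma cube_rec (hcf : CubeFree G) (w : Fin 3 → ℕ) (hwlt : ∀ t, w t < n)
    (hwinj : Function.Injective w) :
    ∀ D : ℕ, ∀ c : (Fin 3 → Fin 2) → V,
      (∀ ε, c ε ∈ interval G p q) →
      (∀ ε t, c ε ∈ wside G vtx (w t) ↔ ε t = 1) →
      G.dist (c (fun _ => 0)) (c (fun _ => 1)) = D → False := by
  have hc := hG.1
  intro D
  induction D using Nat.strong_induction_on with
  | _ D IH =>
    intro c hcI hcW hD
    set a := c (fun _ => 0) with ha
    set b := c (fun _ => 1) with hb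
    have haW : ∀ t, a ∉ wside G vtx (w t) := by
      intro t ht
      exact absurd ((hcW _ t).mp ht) (by decide)
    have hbW : ∀ t, b ∈ wside G vtx (w t) := fun t => (hcW _ t).mpr rfl
    have haI : a ∈ interval G p q := hcI _
    have hbI : b ∈ interval G p q := hcI _
    -- normalized family inside I(a,b)
    set c' : (Fin 3 → Fin 2) → V := fun ε => med hG (c ε) a b with hc'def
    have hc'I : ∀ ε, c' ε ∈ interval G a b := fun ε => (med_spec hG (c ε) a b).2.1
    have hc'pq : ∀ ε, c' ε ∈ interval G p q := fun ε =>
      interval_convex hG p q a haI b hbI (hc'I ε)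
    have hc'W : ∀ ε t, c' ε ∈ wside G vtx (w t) ↔ ε t = 1 := by
      intro ε t
      obtain ⟨n1, n2, n3⟩ := med_spec hG (c ε) a b
      by_cases h : ε t = 1
      · exact ⟨fun _ => h, fun _ =>
          wside_convex hG h0 hn hnd hadj hdp _ (hwlt t) (c ε) ((hcW ε t).mpr h) b (hbW t) n3⟩
      · constructor
        · intro hmem
          exact absurd hmem
            (wside_compl_convex hG h0 hn hnd hadj hdp _ (hwlt t) (c ε)
              (fun hx => h ((hcW ε t).mp hx)) a (haW t) n1)
        · intro h1; exact absurd h1 h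
    -- separating walls of (a, b)
    set S := (Finset.range n).filter (wsep G vtx a b) with hS
    have hScard : S.card = D := by
      rw [hS, ← dist_eq_wsep_card hG h0 hn hnd hadj hdp haI hbI, hD]
    have himg : ∀ t, w t ∈ S := by
      intro t
      rw [hS, Finset.mem_filter, Finset.mem_range]
      exact ⟨hwlt t, Or.inr ⟨haW t, hbW t⟩⟩
    have himgsub : Finset.univ.image w ⊆ S := by
      intro i hi
      obtain ⟨t, _, rfl⟩ := Finset.mem_image.mp hi
      exact himg t
    have hcard3 : (Finset.univ.image w).card = 3 := by
      rw [Finset.card_image_of_injective _ hwinj, Finset.card_univ]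
      simp
    have hD3 : 3 ≤ D := by
      rw [← hScard, ← hcard3]
      exact Finset.card_le_card himgsub
    by_cases hD3e : D = 3
    · -- base case : the 8 normalized points form a cube
      have hSeq : S = Finset.univ.image w :=
        (Finset.eq_of_subset_of_card_le himgsub (by omega)).symm
      have hdist : ∀ ε δ, G.dist (c' ε) (c' δ) =
          (Finset.univ.filter fun t => ε t ≠ δ t).card := by
        intro ε δ
        rw [dist_eq_wsep_card hG h0 hn hnd hadj hdp (hc'pq ε) (hc'pq δ)]
        have hfil : (Finset.range n).filter (wsep G vtx (c' ε) (c' δ)) =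
            S.filter (wsep G vtx (c' ε) (c' δ)) := by
          ext i
          rw [hS]
          simp only [Finset.mem_filter, Finset.mem_range]
          constructor
          · rintro ⟨hi, hsep⟩
            refine ⟨⟨hi, ?_⟩, hsep⟩
            by_contra hns
            exact wsep_interval hG h0 hn hnd hadj hdp i hi hns (hc'I ε) (hc'I δ) hsep
          · rintro ⟨⟨hi, _⟩, hsep⟩
            exact ⟨hi, hsep⟩
        rw [hfil, hSeq, Finset.filter_image, Finset.card_image_of_injective _ hwinj]
        congr 1
        apply Finset.filter_congr
        intro t _
        have h1 := hc'W ε t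
        have h2 := hc'W δ t
        have h01 : ¬ ((0 : Fin 2) = 1) := by decide
        unfold wsep
        rcases fin2_cases (ε t) with hx | hx <;> rcases fin2_cases (δ t) with hy | hy <;>
          rw [hx] at h1 ⊢ <;> rw [hy] at h2 ⊢ <;>
          constructor <;> intro hh <;> tauto
      exact cube_base hcf hdist
    · -- recursive case: D ≥ 4
      have hnsub : ¬ S ⊆ Finset.univ.image w := by
        intro hsub
        have := Finset.card_le_card hsub
        omega
      obtain ⟨l, hlS, hlimg⟩ := Finset.not_subset.mp hnsub
      have hl : l < n := Finset.mem_range.mp (Finset.mem_filter.mp hlS).1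
      have hsepl : wsep G vtx a b l := (Finset.mem_filter.mp hlS).2
      have hlw : ∀ t, w t ≠ l := by
        intro t he
        exact hlimg (he ▸ Finset.mem_image_of_mem w (Finset.mem_univ t))
      have h01 : ¬ ((0 : Fin 2) = 1) := by decide
      -- orientations of a and b on wall l
      set va : Fin 2 := if a ∈ wside G vtx l then 1 else 0 with hva
      set vb : Fin 2 := if a ∈ wside G vtx l then 0 else 1 with hvb
      have hame : a ∈ eside G vtx l va := by
        rw [mem_eside]
        by_cases hh : a ∈ wside G vtx l
        · rw [hva, if_pos hh]; tauto
        · rw [hva, if_neg hh]; tauto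
      have hbme : b ∈ eside G vtx l vb := by
        rw [mem_eside]
        rcases hsepl with ⟨hx, hy⟩ | ⟨hx, hy⟩
        · rw [hvb, if_pos hx]; tauto
        · rw [hvb, if_neg hx]; tauto
      have hdichot : ∀ z : V, z ∈ eside G vtx l va ∨ z ∈ eside G vtx l vb := by
        intro z
        by_cases hz : z ∈ wside G vtx l <;> by_cases hh : a ∈ wside G vtx l
        · left; rw [mem_eside, hva, if_pos hh]; tauto
        · right; rw [mem_eside, hvb, if_neg hh]; tauto
        · right; rw [mem_eside, hvb, if_pos hh]; tauto
        · left; rw [mem_eside, hva, if_neg hh]; tauto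
      -- choice of the working side σ of wall l
      have hsig : ∃ σ : Fin 2,
          (∀ t, ∀ v : Fin 2, ∃ z, z ∈ eside G vtx (w t) v ∧ z ∈ eside G vtx l σ)
          ∧ (∃ z, z ∈ eside G vtx l σ ∧ z ∈ interval G a b) := by
        by_cases hfa : ∀ t, ∃ z, z ∈ wside G vtx (w t) ∧ z ∈ eside G vtx l va
        · refine ⟨va, ?_, ⟨a, hame, left_mem_interval a b⟩⟩
          intro t v
          rcases fin2_cases v with hv | hv <;> subst hv
          · exact ⟨a, by rw [mem_eside]; exact ⟨fun h => absurd h (haW t), fun h => absurd h h01⟩,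
              hame⟩
          · obtain ⟨z, hz1, hz2⟩ := hfa t
            exact ⟨z, by rw [mem_eside]; tauto, hz2⟩
        · obtain ⟨t, hta⟩ := not_forall.mp hfa
          rw [not_exists] at hta
          by_cases hfb : ∀ t', ∃ z, z ∉ wside G vtx (w t') ∧ z ∈ eside G vtx l vb
          · refine ⟨vb, ?_, ⟨b, hbme, right_mem_interval a b⟩⟩
            intro t' v
            rcases fin2_cases v with hv | hv <;> subst hv
            · obtain ⟨z, hz1, hz2⟩ := hfb t'
              exact ⟨z, by rw [mem_eside]; tauto, hz2⟩
            · exact ⟨b, by rw [mem_eside]; tauto, hbme⟩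
          · obtain ⟨t', htb⟩ := not_forall.mp hfb
            rw [not_exists] at htb
            exfalso
            by_cases hw : w t = w t'
            · -- same wall: the trace of wall (w t) coincides with side vb of wall l
              have hiff : ∀ z : V, z ∈ wside G vtx (w t) ↔ z ∈ eside G vtx l vb := by
                intro z
                constructor
                · intro hz
                  rcases hdichot z with h | h
                  · exact absurd (show z ∈ wside G vtx (w t) ∧ z ∈ eside G vtx l va
                      from ⟨hz, h⟩) (hta z)
                  · exact h
                · intro hz
                  by_contra hzn
                  rw [hw] at hzn
                  exact htb z ⟨hzn, hz⟩
              by_cases hawl : a ∈ wside G vtx l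
              · have hvb0 : vb = 0 := by rw [hvb, if_pos hawl]
                apply wside_trace_ne' hG h0 hn hnd hadj hdp (hwlt t) hl
                intro z
                have := hiff z
                rw [mem_eside, hvb0] at this
                tauto
              · have hvb1 : vb = 1 := by rw [hvb, if_neg hawl]
                apply wside_trace_ne hG h0 hn hnd hadj hdp (hwlt t) hl (hlw t)
                intro z
                have := hiff z
                rw [mem_eside, hvb1] at this
                tauto
            · -- different walls: the indicator pattern point gives a contradiction
              have htne : t' ≠ t := fun h => hw (congrArg w h).symm
              have hz1 : c' (fun s => if s = t then 1 else 0) ∈ wside G vtx (w t) :=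
                (hc'W _ t).mpr (by rw [if_pos rfl])
              have hz2 : c' (fun s => if s = t then 1 else 0) ∉ wside G vtx (w t') := by
                intro h
                have := (hc'W _ t').mp h
                rw [if_neg htne] at this
                exact h01 this
              rcases hdichot (c' (fun s => if s = t then 1 else 0)) with h | h
              · exact hta _ ⟨hz1, h⟩
              · exact htb _ ⟨hz2, h⟩
      obtain ⟨σ, hσ6, hσE⟩ := hsig
      -- Helly for each pattern
      have hnew : ∀ ε : Fin 3 → Fin 2, ∃ z, (∀ t, z ∈ eside G vtx (w t) (ε t)) ∧
          z ∈ eside G vtx l σ ∧ z ∈ interval G a b := by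
        intro ε
        have hc'side : ∀ δ : Fin 3 → Fin 2, ∀ t, c' δ ∈ eside G vtx (w t) (δ t) := by
          intro δ t; rw [mem_eside]; exact hc'W δ t
        obtain ⟨z, h1, h2, h3, h4, h5⟩ := helly5 hG
          (eside_convex hG h0 hn hnd hadj hdp _ (hwlt 0) (ε 0))
          (eside_convex hG h0 hn hnd hadj hdp _ (hwlt 1) (ε 1))
          (eside_convex hG h0 hn hnd hadj hdp _ (hwlt 2) (ε 2))
          (eside_convex hG h0 hn hnd hadj hdp _ hl σ)
          (interval_convex hG a b)
          ⟨c' ε, hc'side ε 0, hc'side ε 1⟩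
          ⟨c' ε, hc'side ε 0, hc'side ε 2⟩
          (hσ6 0 (ε 0))
          ⟨c' ε, hc'side ε 0, hc'I ε⟩
          ⟨c' ε, hc'side ε 1, hc'side ε 2⟩
          (hσ6 1 (ε 1))
          ⟨c' ε, hc'side ε 1, hc'I ε⟩
          (hσ6 2 (ε 2))
          ⟨c' ε, hc'side ε 2, hc'I ε⟩
          hσE
        refine ⟨z, ?_, h4, h5⟩
        intro t
        have ht012 : t = 0 ∨ t = 1 ∨ t = 2 := by omega
        rcases ht012 with h | h | h <;> subst h <;> assumption
      choose c₂ hc₂ using hnew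
      set a' := c₂ (fun _ => 0) with ha'
      set b' := c₂ (fun _ => 1) with hb'
      have ha'I : a' ∈ interval G p q := interval_convex hG p q a haI b hbI (hc₂ _).2.2
      have hb'I : b' ∈ interval G p q := interval_convex hG p q a haI b hbI (hc₂ _).2.2
      -- the new pair is strictly closer
      have hS'sub : (Finset.range n).filter (wsep G vtx a' b') ⊆ S.erase l := by
        intro i hi
        rw [Finset.mem_filter, Finset.mem_range] at hi
        rw [Finset.mem_erase]
        constructor
        · intro he
          subst he
          have h1 := (hc₂ (fun _ => 0)).2.1
          have h2 := (hc₂ (fun _ => 1)).2.1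
          rw [mem_eside] at h1 h2
          rcases hi.2 with ⟨hx, hy⟩ | ⟨hx, hy⟩
          · exact hy (h2.mpr (h1.mp hx))
          · exact hx (h1.mpr (h2.mp hy))
        · rw [hS, Finset.mem_filter, Finset.mem_range]
          refine ⟨hi.1, ?_⟩
          by_contra hns
          exact wsep_interval hG h0 hn hnd hadj hdp i hi.1 hns (hc₂ _).2.2 (hc₂ _).2.2 hi.2
      have hltD : G.dist a' b' < D := by
        rw [dist_eq_wsep_card hG h0 hn hnd hadj hdp ha'I hb'I]
        calc ((Finset.range n).filter (wsep G vtx a' b')).card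
            ≤ (S.erase l).card := Finset.card_le_card hS'sub
          _ < S.card := Finset.card_erase_lt_of_mem hlS
          _ = D := hScard
      -- new normalized family and recursion
      refine IH (G.dist a' b') hltD (fun ε => med hG (c₂ ε) a' b') ?_ ?_ ?_
      · intro ε
        exact interval_convex hG p q a' ha'I b' hb'I (med_spec hG (c₂ ε) a' b').2.1
      · intro ε t
        obtain ⟨n1, n2, n3⟩ := med_spec hG (c₂ ε) a' b'
        have hε := (hc₂ ε).1 t
        rw [mem_eside] at hε
        have ha't : a' ∉ wside G vtx (w t) := by
          have hh := (hc₂ (fun _ => 0)).1 t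
          rw [mem_eside] at hh
          exact fun h => h01 (hh.mp h)
        have hb't : b' ∈ wside G vtx (w t) := by
          have hh := (hc₂ (fun _ => 1)).1 t
          rw [mem_eside] at hh
          exact hh.mpr rfl
        by_cases h : ε t = 1
        · exact ⟨fun _ => h, fun _ =>
            wside_convex hG h0 hn hnd hadj hdp _ (hwlt t) (c₂ ε) (hε.mpr h) b' hb't n3⟩
        · constructor
          · intro hmem
            exact absurd hmem
              (wside_compl_convex hG h0 hn hnd hadj hdp _ (hwlt t) (c₂ ε)
                (fun hx => h (hε.mp hx)) a' ha't n1)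
          · intro h1; exact absurd h1 h
      · show G.dist (med hG (c₂ fun _ => 0) a' b') (med hG (c₂ fun _ => 1) a' b') = _
        rw [← ha', ← hb', med_eq_left hG a' b', med_eq_right hG a' b']

end Cube
-- ===================== Part 6 : width-2 Dilworth =====================

section Dilworth

variable (le : ℕ → ℕ → Prop)

lemma chain_top (htrans : ∀ x y z, le x y → le y z → le x z) (href : ∀ x, le x x) :
    ∀ C : Finset ℕ, C.Nonempty → (∀ x ∈ C, ∀ y ∈ C, le x y ∨ le y x) →
      ∃ m ∈ C, ∀ x ∈ C, le x m := by
  intro C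
  induction C using Finset.induction_on with
  | empty => intro h; exact absurd h (by simp)
  | @insert a s hnotmem IH =>
    intro _ hch
    rcases s.eq_empty_or_nonempty with he | hne
    · subst he
      refine ⟨a, Finset.mem_insert_self a ∅, ?_⟩
      intro x hx
      rw [Finset.mem_insert] at hx
      rcases hx with hxa | hx
      · rw [hxa]; exact href a
      · simp at hx
    · obtain ⟨m, hm, hmax⟩ := IH hne
        (fun x hx y hy => hch x (Finset.mem_insert_of_mem hx) y (Finset.mem_insert_of_mem hy))
      rcases hch a (Finset.mem_insert_self a s) m (Finset.mem_insert_of_mem hm) with h | h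
      · refine ⟨m, Finset.mem_insert_of_mem hm, ?_⟩
        intro x hx
        rcases Finset.mem_insert.mp hx with hxa | hx
        · rw [hxa]; exact h
        · exact hmax x hx
      · refine ⟨a, Finset.mem_insert_self a s, ?_⟩
        intro x hx
        rcases Finset.mem_insert.mp hx with hxa | hx
        · rw [hxa]; exact href a
        · exact htrans x m a (hmax x hx) h

lemma two_chain_cover (href : ∀ x, le x x)
    (htrans : ∀ x y z, le x y → le y z → le x z)
    (hanti : ∀ x y, le x y → le y x → x = y) :
    ∀ k : ℕ, ∀ s : Finset ℕ, s.card = k →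
    (∀ x ∈ s, ∀ y ∈ s, ∀ z ∈ s, x ≠ y → x ≠ z → y ≠ z →
      ¬ le x y → ¬ le y x → ¬ le x z → ¬ le z x → ¬ le y z → ¬ le z y → False) →
    ∃ s₁ s₂ : Finset ℕ, s₁ ∪ s₂ = s ∧
      (∀ x ∈ s₁, ∀ y ∈ s₁, le x y ∨ le y x) ∧
      (∀ x ∈ s₂, ∀ y ∈ s₂, le x y ∨ le y x) := by
  intro k
  induction k using Nat.strong_induction_on with
  | _ k IH =>
    intro s hcard hwidth
    -- maximum-cardinality chain
    set 𝒞 := s.powerset.filter (fun t => ∀ x ∈ t, ∀ y ∈ t, le x y ∨ le y x) with h𝒞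
    have h𝒞ne : 𝒞.Nonempty := by
      refine ⟨∅, ?_⟩
      simp only [h𝒞, Finset.mem_filter, Finset.mem_powerset]
      exact ⟨Finset.empty_subset s, by simp⟩
    obtain ⟨C, hC𝒞, hCmax⟩ := Finset.exists_max_image 𝒞 Finset.card h𝒞ne
    simp only [h𝒞, Finset.mem_filter, Finset.mem_powerset] at hC𝒞
    obtain ⟨hCs, hCchain⟩ := hC𝒞
    by_cases hrest : ∀ x ∈ s \ C, ∀ y ∈ s \ C, le x y ∨ le y x
    · exact ⟨C, s \ C, Finset.union_sdiff_of_subset hCs, hCchain, hrest⟩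
    push_neg at hrest
    obtain ⟨a₁, ha₁m, a₂, ha₂m, hinc1, hinc2⟩ := hrest
    have ha₁s : a₁ ∈ s := (Finset.mem_sdiff.mp ha₁m).1
    have ha₂s : a₂ ∈ s := (Finset.mem_sdiff.mp ha₂m).1
    have ha₁C : a₁ ∉ C := (Finset.mem_sdiff.mp ha₁m).2
    have ha₂C : a₂ ∉ C := (Finset.mem_sdiff.mp ha₂m).2
    have hane : a₁ ≠ a₂ := by
      intro h; rw [h] at hinc1; exact hinc1 (href a₂)
    -- C extended by a comparable-to-all element contradicts maximality
    have hext : ∀ w ∈ s, w ∉ C → (∀ x ∈ C, le x w ∨ le w x) → False := by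
      intro w hws hwC hcomp
      have hmem : insert w C ∈ 𝒞 := by
        simp only [h𝒞, Finset.mem_filter, Finset.mem_powerset]
        constructor
        · exact Finset.insert_subset hws hCs
        · intro x hx y hy
          rcases Finset.mem_insert.mp hx with hxw | hx'
          · rcases Finset.mem_insert.mp hy with hyw | hy'
            · rw [hxw, hyw]; exact Or.inl (href w)
            · rw [hxw]
              rcases hcomp y hy' with h | h
              · exact Or.inr h
              · exact Or.inl h
          · rcases Finset.mem_insert.mp hy with hyw | hy'
            · rw [hyw]; exact hcomp x hx'
            · exact hCchain x hx' y hy'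
      have := hCmax _ hmem
      rw [Finset.card_insert_of_notMem hwC] at this
      omega
    have hCne : C.Nonempty := by
      rcases C.eq_empty_or_nonempty with he | hne
      · exfalso
        apply hext a₁ ha₁s ha₁C
        intro x hx
        rw [he] at hx
        simp at hx
      · exact hne
    obtain ⟨mtop, hmtop, hmtopmax⟩ := chain_top le htrans href C hCne hCchain
    obtain ⟨mbot, hmbot, hmbotmin⟩ :=
      chain_top (fun x y => le y x) (fun x y z h1 h2 => htrans z y x h2 h1) href C hCne
        (fun x hx y hy => (hCchain x hx y hy).symm)
    set Pm := s.filter (fun x => le x a₁ ∨ le x a₂) with hPm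
    set Pp := s.filter (fun x => le a₁ x ∨ le a₂ x) with hPp
    have hcover : ∀ x ∈ s, x ∈ Pm ∨ x ∈ Pp := by
      intro x hx
      by_contra hcon
      push_neg at hcon
      simp only [hPm, Finset.mem_filter] at hcon
      simp only [hPp, Finset.mem_filter] at hcon
      push_neg at hcon
      obtain ⟨h1, h2⟩ := hcon
      have h1' := h1 hx
      have h2' := h2 hx
      have hx1 : x ≠ a₁ := by rintro rfl; exact h1'.1 (href x)
      have hx2 : x ≠ a₂ := by rintro rfl; exact h1'.2 (href x)
      exact hwidth x hx a₁ ha₁s a₂ ha₂s hx1 hx2 hane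
        h1'.1 h2'.1 h1'.2 h2'.2 hinc1 hinc2
    have htopm : mtop ∉ Pm := by
      intro hmem
      simp only [hPm, Finset.mem_filter] at hmem
      rcases hmem.2 with h | h
      · exact hext a₁ ha₁s ha₁C (fun x hx => Or.inl (htrans x mtop a₁ (hmtopmax x hx) h))
      · exact hext a₂ ha₂s ha₂C (fun x hx => Or.inl (htrans x mtop a₂ (hmtopmax x hx) h))
    have hbotp : mbot ∉ Pp := by
      intro hmem
      simp only [hPp, Finset.mem_filter] at hmem
      rcases hmem.2 with h | h
      · exact hext a₁ ha₁s ha₁C (fun x hx => Or.inr (htrans a₁ mbot x h (hmbotmin x hx)))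
      · exact hext a₂ ha₂s ha₂C (fun x hx => Or.inr (htrans a₂ mbot x h (hmbotmin x hx)))
    have ha₁Pm : a₁ ∈ Pm := by
      simp only [hPm, Finset.mem_filter]; exact ⟨ha₁s, Or.inl (href a₁)⟩
    have ha₂Pm : a₂ ∈ Pm := by
      simp only [hPm, Finset.mem_filter]; exact ⟨ha₂s, Or.inr (href a₂)⟩
    have ha₁Pp : a₁ ∈ Pp := by
      simp only [hPp, Finset.mem_filter]; exact ⟨ha₁s, Or.inl (href a₁)⟩
    have ha₂Pp : a₂ ∈ Pp := by
      simp only [hPp, Finset.mem_filter]; exact ⟨ha₂s, Or.inr (href a₂)⟩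
    have hPmcard : Pm.card < k := by
      rw [← hcard]
      apply Finset.card_lt_card
      constructor
      · exact Finset.filter_subset _ _
      · intro hsub
        exact htopm (hsub (hCs hmtop))
    have hPpcard : Pp.card < k := by
      rw [← hcard]
      apply Finset.card_lt_card
      constructor
      · exact Finset.filter_subset _ _
      · intro hsub
        exact hbotp (hsub (hCs hmbot))
    have hPmw : ∀ x ∈ Pm, x ∈ s := fun x hx => (Finset.mem_filter.mp hx).1
    have hPpw : ∀ x ∈ Pp, x ∈ s := fun x hx => (Finset.mem_filter.mp hx).1
    obtain ⟨D₁, D₂, hDu, hD₁c, hD₂c⟩ := IH Pm.card hPmcard Pm rfl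
      (fun x hx y hy z hz => hwidth x (hPmw x hx) y (hPmw y hy) z (hPmw z hz))
    obtain ⟨U₁, U₂, hUu, hU₁c, hU₂c⟩ := IH Pp.card hPpcard Pp rfl
      (fun x hx y hy z hz => hwidth x (hPpw x hx) y (hPpw y hy) z (hPpw z hz))
    -- arrange a₁ ∈ D₁, a₂ ∈ D₂
    have harr : ∀ (D₁ D₂ : Finset ℕ), D₁ ∪ D₂ = Pm →
        (∀ x ∈ D₁, ∀ y ∈ D₁, le x y ∨ le y x) → (∀ x ∈ D₂, ∀ y ∈ D₂, le x y ∨ le y x) →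
        ∃ E₁ E₂, E₁ ∪ E₂ = Pm ∧ (∀ x ∈ E₁, ∀ y ∈ E₁, le x y ∨ le y x) ∧
          (∀ x ∈ E₂, ∀ y ∈ E₂, le x y ∨ le y x) ∧ a₁ ∈ E₁ ∧ a₂ ∈ E₂ := by
      intro D₁ D₂ hDu hD₁c hD₂c
      have h1 : a₁ ∈ D₁ ∪ D₂ := by rw [hDu]; exact ha₁Pm
      have h2 : a₂ ∈ D₁ ∪ D₂ := by rw [hDu]; exact ha₂Pm
      rcases Finset.mem_union.mp h1 with hh1 | hh1 <;> rcases Finset.mem_union.mp h2 with hh2 | hh2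
      · exact absurd (hD₁c a₁ hh1 a₂ hh2) (by tauto)
      · exact ⟨D₁, D₂, hDu, hD₁c, hD₂c, hh1, hh2⟩
      · exact ⟨D₂, D₁, by rw [Finset.union_comm]; exact hDu, hD₂c, hD₁c, hh1, hh2⟩
      · exact absurd (hD₂c a₁ hh1 a₂ hh2) (by tauto)
    obtain ⟨E₁, E₂, hEu, hE₁c, hE₂c, ha₁E, ha₂E⟩ := harr D₁ D₂ hDu hD₁c hD₂c
    -- same on the upper side (with roles of ≤ flipped)
    have harr' : ∃ F₁ F₂, F₁ ∪ F₂ = Pp ∧ (∀ x ∈ F₁, ∀ y ∈ F₁, le x y ∨ le y x) ∧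
        (∀ x ∈ F₂, ∀ y ∈ F₂, le x y ∨ le y x) ∧ a₁ ∈ F₁ ∧ a₂ ∈ F₂ := by
      have h1 : a₁ ∈ U₁ ∪ U₂ := by rw [hUu]; exact ha₁Pp
      have h2 : a₂ ∈ U₁ ∪ U₂ := by rw [hUu]; exact ha₂Pp
      rcases Finset.mem_union.mp h1 with hh1 | hh1 <;> rcases Finset.mem_union.mp h2 with hh2 | hh2
      · exact absurd (hU₁c a₁ hh1 a₂ hh2) (by tauto)
      · exact ⟨U₁, U₂, hUu, hU₁c, hU₂c, hh1, hh2⟩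
      · exact ⟨U₂, U₁, by rw [Finset.union_comm]; exact hUu, hU₂c, hU₁c, hh1, hh2⟩
      · exact absurd (hU₂c a₁ hh1 a₂ hh2) (by tauto)
    obtain ⟨F₁, F₂, hFu, hF₁c, hF₂c, ha₁F, ha₂F⟩ := harr'
    have hE₁P : E₁ ⊆ Pm := by rw [← hEu]; exact Finset.subset_union_left
    have hE₂P : E₂ ⊆ Pm := by rw [← hEu]; exact Finset.subset_union_right
    have hF₁P : F₁ ⊆ Pp := by rw [← hFu]; exact Finset.subset_union_left
    have hF₂P : F₂ ⊆ Pp := by rw [← hFu]; exact Finset.subset_union_right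
    have hE₁b : ∀ x ∈ E₁, le x a₁ := by
      intro x hx
      rcases hE₁c x hx a₁ ha₁E with h | h
      · exact h
      · rcases (Finset.mem_filter.mp (hE₁P hx)).2 with h2 | h2
        · exact h2
        · exact absurd (htrans a₁ x a₂ h h2) hinc1
    have hE₂b : ∀ x ∈ E₂, le x a₂ := by
      intro x hx
      rcases hE₂c x hx a₂ ha₂E with h | h
      · exact h
      · rcases (Finset.mem_filter.mp (hE₂P hx)).2 with h2 | h2
        · exact absurd (htrans a₂ x a₁ h h2) hinc2
        · exact h2
    have hF₁b : ∀ x ∈ F₁, le a₁ x := by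
      intro x hx
      rcases hF₁c x hx a₁ ha₁F with h | h
      · rcases (Finset.mem_filter.mp (hF₁P hx)).2 with h2 | h2
        · exact h2
        · exact absurd (htrans a₂ x a₁ h2 h) hinc2
      · exact h
    have hF₂b : ∀ x ∈ F₂, le a₂ x := by
      intro x hx
      rcases hF₂c x hx a₂ ha₂F with h | h
      · rcases (Finset.mem_filter.mp (hF₂P hx)).2 with h2 | h2
        · exact absurd (htrans a₁ x a₂ h2 h) hinc1
        · exact h2
      · exact h
    refine ⟨E₁ ∪ F₁, E₂ ∪ F₂, ?_, ?_, ?_⟩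
    · apply Finset.Subset.antisymm
      · intro x hx
        rcases Finset.mem_union.mp hx with h | h
        · rcases Finset.mem_union.mp h with h | h
          · exact hPmw x (hE₁P h)
          · exact hPpw x (hF₁P h)
        · rcases Finset.mem_union.mp h with h | h
          · exact hPmw x (hE₂P h)
          · exact hPpw x (hF₂P h)
      · intro x hx
        rcases hcover x hx with h | h
        · rw [← hEu] at h
          rcases Finset.mem_union.mp h with h | h
          · exact Finset.mem_union_left _ (Finset.mem_union_left _ h)
          · exact Finset.mem_union_right _ (Finset.mem_union_left _ h)
        · rw [← hFu] at h
          rcases Finset.mem_union.mp h with h | h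
          · exact Finset.mem_union_left _ (Finset.mem_union_right _ h)
          · exact Finset.mem_union_right _ (Finset.mem_union_right _ h)
    · intro x hx y hy
      rcases Finset.mem_union.mp hx with h1 | h1 <;> rcases Finset.mem_union.mp hy with h2 | h2
      · exact hE₁c x h1 y h2
      · exact Or.inl (htrans x a₁ y (hE₁b x h1) (hF₁b y h2))
      · exact Or.inr (htrans y a₁ x (hE₁b y h2) (hF₁b x h1))
      · exact hF₁c x h1 y h2
    · intro x hx y hy
      rcases Finset.mem_union.mp hx with h1 | h1 <;> rcases Finset.mem_union.mp hy with h2 | h2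
      · exact hE₂c x h1 y h2
      · exact Or.inl (htrans x a₂ y (hE₂b x h1) (hF₂b y h2))
      · exact Or.inr (htrans y a₂ x (hE₂b y h2) (hF₂b x h1))
      · exact hF₂c x h1 y h2

end Dilworth
-- ===================== Part 7 : assembly =====================

/-- Wall order (within the interval `I(p,q)`): `wle i j` iff the `q`-side of wall `j`
(restricted to the interval) is contained in that of wall `i`. -/
def wle (G : SimpleGraph V) (vtx : ℕ → V) (p q : V) (i j : ℕ) : Prop :=
  ∀ z ∈ interval G p q, z ∈ wside G vtx j → z ∈ wside G vtx i

section Assemble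

variable (hG : IsMedianGraph G) {p q : V} {n : ℕ} {vtx : ℕ → V}
variable (h0 : vtx 0 = p) (hn : vtx n = q) (hnd : G.dist p q = n)
  (hadj : ∀ i < n, G.Adj (vtx i) (vtx (i+1)))
  (hdp : ∀ i ≤ n, G.dist p (vtx i) = i ∧ G.dist (vtx i) q = n - i)

include hG h0 hn hnd hadj hdp

lemma vtx_mem_interval (j : ℕ) (hj : j ≤ n) : vtx j ∈ interval G p q := by
  rw [mem_interval, (hdp j hj).1, (hdp j hj).2, hnd]
  omega

/-- antisymmetry of the wall order on genuine walls -/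
lemma wle_antisymm {i j : ℕ} (hi : i < n) (hj : j < n)
    (h1 : wle G vtx p q i j) (h2 : wle G vtx p q j i) : i = j := by
  by_contra hne
  rcases Nat.lt_or_ge i j with h | h
  · have hz : vtx (i+1) ∈ wside G vtx i :=
      (vtx_mem_wside hG h0 hn hnd hadj hdp i hi (i+1) (by omega)).mpr (by omega)
    have hzi : vtx (i+1) ∈ interval G p q := vtx_mem_interval hG h0 hn hnd hadj hdp (i+1) (by omega)
    have := h2 _ hzi hz
    have := (vtx_mem_wside hG h0 hn hnd hadj hdp j hj (i+1) (by omega)).mp this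
    omega
  · have hij : j < i := by omega
    have hz : vtx (j+1) ∈ wside G vtx j :=
      (vtx_mem_wside hG h0 hn hnd hadj hdp j hj (j+1) (by omega)).mpr (by omega)
    have hzi : vtx (j+1) ∈ interval G p q := vtx_mem_interval hG h0 hn hnd hadj hdp (j+1) (by omega)
    have := h1 _ hzi hz
    have := (vtx_mem_wside hG h0 hn hnd hadj hdp i hi (j+1) (by omega)).mp this
    omega

/-- three pairwise crossing walls are impossible (via `cube_rec`). -/
lemma wall_width3 (hcf : CubeFree G) (i j k : ℕ) (hi : i < n) (hj : j < n) (hk : k < n)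
    (hij : i ≠ j) (hik : i ≠ k) (hjk : j ≠ k)
    (cij : ∃ z, z ∈ interval G p q ∧ z ∈ wside G vtx i ∧ z ∉ wside G vtx j)
    (cji : ∃ z, z ∈ interval G p q ∧ z ∈ wside G vtx j ∧ z ∉ wside G vtx i)
    (cik : ∃ z, z ∈ interval G p q ∧ z ∈ wside G vtx i ∧ z ∉ wside G vtx k)
    (cki : ∃ z, z ∈ interval G p q ∧ z ∈ wside G vtx k ∧ z ∉ wside G vtx i)
    (cjk : ∃ z, z ∈ interval G p q ∧ z ∈ wside G vtx j ∧ z ∉ wside G vtx k)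
    (ckj : ∃ z, z ∈ interval G p q ∧ z ∈ wside G vtx k ∧ z ∉ wside G vtx j) : False := by
  set w : Fin 3 → ℕ := fun t => if t.val = 0 then i else if t.val = 1 then j else k with hwdef
  have hwlt : ∀ t, w t < n := by
    intro t
    fin_cases t
    · exact hi
    · exact hj
    · exact hk
  have hwinj : Function.Injective w := by
    intro t1 t2 h
    fin_cases t1 <;> fin_cases t2 <;>
      first
        | rfl
        | exact absurd h hij | exact absurd h.symm hij
        | exact absurd h hik | exact absurd h.symm hik
        | exact absurd h hjk | exact absurd h.symm hjk
  have hcross : ∀ t t' : Fin 3, t ≠ t' →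
      ∃ z, z ∈ interval G p q ∧ z ∈ wside G vtx (w t) ∧ z ∉ wside G vtx (w t') := by
    intro t t' htt
    fin_cases t <;> fin_cases t' <;>
      first
        | exact absurd rfl htt
        | exact cij | exact cji | exact cik | exact cki | exact cjk | exact ckj
  -- now the construction
  have h01 : ¬ ((0 : Fin 2) = 1) := by decide
  have hpI : p ∈ interval G p q := left_mem_interval p q
  have hqI : q ∈ interval G p q := right_mem_interval p q
  have hpair : ∀ t t' : Fin 3, t ≠ t' → ∀ u v : Fin 2,
      ∃ z, z ∈ eside G vtx (w t) u ∧ z ∈ eside G vtx (w t') v ∧ z ∈ interval G p q := by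
    intro t t' htt u v
    rcases fin2_cases u with hu | hu <;> subst hu <;> rcases fin2_cases v with hv | hv <;> subst hv
    · exact ⟨p, by rw [mem_eside]; exact ⟨fun h => absurd h
          (p_notMem_wside hG h0 hn hnd hadj hdp _ (hwlt t)), fun h => absurd h h01⟩,
        by rw [mem_eside]; exact ⟨fun h => absurd h
          (p_notMem_wside hG h0 hn hnd hadj hdp _ (hwlt t')), fun h => absurd h h01⟩, hpI⟩
    · obtain ⟨z, hzI, hz2, hz1⟩ := hcross t' t (Ne.symm htt)
      exact ⟨z, by rw [mem_eside]; tauto, by rw [mem_eside]; tauto, hzI⟩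
    · obtain ⟨z, hzI, hz1, hz2⟩ := hcross t t' htt
      exact ⟨z, by rw [mem_eside]; tauto, by rw [mem_eside]; tauto, hzI⟩
    · exact ⟨q, by rw [mem_eside]; exact ⟨fun _ => rfl,
          fun _ => q_mem_wside hG h0 hn hnd hadj hdp _ (hwlt t)⟩,
        by rw [mem_eside]; exact ⟨fun _ => rfl,
          fun _ => q_mem_wside hG h0 hn hnd hadj hdp _ (hwlt t')⟩, hqI⟩
  have hIconv : GraphConvex G (interval G p q) := interval_convex hG p q
  have hnew : ∀ ε : Fin 3 → Fin 2, ∃ z, (∀ t, z ∈ eside G vtx (w t) (ε t)) ∧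
      z ∈ interval G p q := by
    intro ε
    obtain ⟨z, h1, h2, h3, h4⟩ := helly4 hG
      (eside_convex hG h0 hn hnd hadj hdp _ (hwlt 0) (ε 0))
      (eside_convex hG h0 hn hnd hadj hdp _ (hwlt 1) (ε 1))
      (eside_convex hG h0 hn hnd hadj hdp _ (hwlt 2) (ε 2))
      hIconv
      (by obtain ⟨z, hz1, hz2, _⟩ := hpair 0 1 (by decide) (ε 0) (ε 1); exact ⟨z, hz1, hz2⟩)
      (by obtain ⟨z, hz1, hz2, _⟩ := hpair 0 2 (by decide) (ε 0) (ε 2); exact ⟨z, hz1, hz2⟩)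
      (by obtain ⟨z, hz1, _, hz3⟩ := hpair 0 1 (by decide) (ε 0) (ε 1); exact ⟨z, hz1, hz3⟩)
      (by obtain ⟨z, hz1, hz2, _⟩ := hpair 1 2 (by decide) (ε 1) (ε 2); exact ⟨z, hz1, hz2⟩)
      (by obtain ⟨z, hz1, _, hz3⟩ := hpair 1 2 (by decide) (ε 1) (ε 2); exact ⟨z, hz1, hz3⟩)
      (by obtain ⟨z, hz1, _, hz3⟩ := hpair 2 0 (by decide) (ε 2) (ε 0); exact ⟨z, hz1, hz3⟩)
    refine ⟨z, ?_, h4⟩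
    intro t
    have ht012 : t = 0 ∨ t = 1 ∨ t = 2 := by omega
    rcases ht012 with h | h | h <;> subst h <;> assumption
  choose c₀ hc₀ using hnew
  apply cube_rec hG h0 hn hnd hadj hdp hcf w hwlt hwinj
    (G.dist (c₀ (fun _ => 0)) (c₀ (fun _ => 1))) c₀ (fun ε => (hc₀ ε).2)
    (fun ε t => by have := (hc₀ ε).1 t; rw [mem_eside] at this; exact this) rfl

/-- counting separations along one nested chain of walls. -/
lemma chain_sep_card (T : Finset ℕ)
    (hch : ∀ x ∈ T, ∀ y ∈ T, x = y ∨ wle G vtx p q x y ∨ wle G vtx p q y x)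
    {u v : V} (hu : u ∈ interval G p q) (hv : v ∈ interval G p q) :
    ((T.filter (wsep G vtx u v)).card : ℤ) =
      |((T.filter (fun i => u ∈ wside G vtx i)).card : ℤ) -
        ((T.filter (fun i => v ∈ wside G vtx i)).card : ℤ)| := by
  set A := T.filter (fun i => u ∈ wside G vtx i) with hA
  set B := T.filter (fun i => v ∈ wside G vtx i) with hB
  have hnested : A ⊆ B ∨ B ⊆ A := by
    by_contra hcon
    push_neg at hcon
    obtain ⟨i, hiA, hiB⟩ := Finset.not_subset.mp hcon.1
    obtain ⟨j, hjB, hjA⟩ := Finset.not_subset.mp hcon.2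
    simp only [hA, Finset.mem_filter] at hiA hjA
    simp only [hB, Finset.mem_filter] at hiB hjB
    have hiT := hiA.1
    have hjT := hjB.1
    have hiu := hiA.2
    have hju := hjB.2
    have hiv : v ∉ wside G vtx i := fun h => hiB ⟨hiT, h⟩
    have hju' : u ∉ wside G vtx j := fun h => hjA ⟨hjT, h⟩
    have hij : i ≠ j := fun h => hju' (h ▸ hiu)
    rcases hch i hiT j hjT with h | h | h
    · exact hij h
    · exact hiv (h v hv hju)
    · exact hju' (h u hu hiu)
  have hfil : ∀ (X Y : Finset ℕ), X = A → Y = B →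
      (∀ i ∈ T, (i ∈ X → i ∈ Y)) →
      T.filter (wsep G vtx u v) = (if X = A then B \ A else A \ B) → True := fun _ _ _ _ _ _ => trivial
  rcases hnested with hsub | hsub
  · have hfil : T.filter (wsep G vtx u v) = B \ A := by
      ext i
      simp only [hA, hB, Finset.mem_sdiff, Finset.mem_filter]
      constructor
      · rintro ⟨hiT, hsep⟩
        rcases hsep with ⟨hx, hy⟩ | ⟨hx, hy⟩
        · exfalso
          have : i ∈ B := hsub (by rw [hA]; exact Finset.mem_filter.mpr ⟨hiT, hx⟩)
          rw [hB] at this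
          exact hy (Finset.mem_filter.mp this).2
        · exact ⟨⟨hiT, hy⟩, fun hh => hx hh.2⟩
      · rintro ⟨⟨hiT, hiv⟩, hni⟩
        exact ⟨hiT, Or.inr ⟨fun hh => hni ⟨hiT, hh⟩, hiv⟩⟩
    have hle := Finset.card_le_card hsub
    rw [hfil, Finset.card_sdiff_of_subset hsub, abs_sub_comm, abs_of_nonneg (by push_cast; omega)]
    push_cast
    omega
  · have hfil : T.filter (wsep G vtx u v) = A \ B := by
      ext i
      simp only [hA, hB, Finset.mem_sdiff, Finset.mem_filter]
      constructor
      · rintro ⟨hiT, hsep⟩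
        rcases hsep with ⟨hx, hy⟩ | ⟨hx, hy⟩
        · exact ⟨⟨hiT, hx⟩, fun hh => hy hh.2⟩
        · exfalso
          have : i ∈ A := hsub (by rw [hB]; exact Finset.mem_filter.mpr ⟨hiT, hy⟩)
          rw [hA] at this
          exact hx (Finset.mem_filter.mp this).2
      · rintro ⟨⟨hiT, hiu⟩, hni⟩
        exact ⟨hiT, Or.inl ⟨hiu, fun hh => hni ⟨hiT, hh⟩⟩⟩
    have hle := Finset.card_le_card hsub
    rw [hfil, Finset.card_sdiff_of_subset hsub, abs_of_nonneg (by push_cast; omega)]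
    push_cast
    omega

end Assemble

end IntervalGrid

open IntervalGrid

/-- In a finite cube-free median graph, every interval `I(p,q)` isometrically
embeds into the square grid `ℤ²`. -/
theorem interval_embeds_square_grid {V : Type*} [Fintype V] (G : SimpleGraph V)
    (hG : IsMedianGraph G) (hcf : CubeFree G) (p q : V) :
    ∃ f : V → ℤ × ℤ, ∀ u ∈ interval G p q, ∀ v ∈ interval G p q,
      (G.dist u v : ℤ) = |(f u).1 - (f v).1| + |(f u).2 - (f v).2| := by

  classical
  obtain ⟨vtx, h0, hn, hadjv, hdp⟩ := exists_geo hG.1 p q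
  set n := G.dist p q with hndef
  have hnd : G.dist p q = n := rfl
  set le : ℕ → ℕ → Prop := fun i j => i = j ∨ (i < n ∧ j < n ∧ wle G vtx p q i j) with hle
  have href : ∀ x, le x x := fun x => Or.inl rfl
  have htrans : ∀ x y z, le x y → le y z → le x z := by
    intro x y z h1 h2
    rcases h1 with rfl | ⟨hx, hy, h1⟩
    · exact h2
    · rcases h2 with rfl | ⟨hy', hz, h2⟩
      · exact Or.inr ⟨hx, hy, h1⟩
      · exact Or.inr ⟨hx, hz, fun w hw hww => h1 w hw (h2 w hw hww)⟩
  have hanti : ∀ x y, le x y → le y x → x = y := by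
    intro x y h1 h2
    rcases h1 with rfl | ⟨hx, hy, h1⟩
    · rfl
    · rcases h2 with h | ⟨_, _, h2⟩
      · exact h.symm
      · exact wle_antisymm hG h0 hn hnd hadjv hdp hx hy h1 h2
  have hwidth : ∀ x ∈ Finset.range n, ∀ y ∈ Finset.range n, ∀ z ∈ Finset.range n,
      x ≠ y → x ≠ z → y ≠ z →
      ¬ le x y → ¬ le y x → ¬ le x z → ¬ le z x → ¬ le y z → ¬ le z y → False := by
    intro x hx y hy z hz hxy hxz hyz nxy nyx nxz nzx nyz nzy
    rw [Finset.mem_range] at hx hy hz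
    have hkey : ∀ a b : ℕ, a < n → b < n → ¬ le a b →
        ∃ zz, zz ∈ interval G p q ∧ zz ∈ wside G vtx b ∧ zz ∉ wside G vtx a := by
      intro a b ha hb hnab
      have hw : ¬ wle G vtx p q a b := fun h => hnab (Or.inr ⟨ha, hb, h⟩)
      rw [wle] at hw
      push_neg at hw
      obtain ⟨zz, hz1, hz2, hz3⟩ := hw
      exact ⟨zz, hz1, hz2, hz3⟩
    exact wall_width3 hG h0 hn hnd hadjv hdp hcf x y z hx hy hz hxy hxz hyz
      (hkey y x hy hx nyx) (hkey x y hx hy nxy)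
      (hkey z x hz hx nzx) (hkey x z hx hz nxz)
      (hkey z y hz hy nzy) (hkey y z hy hz nyz)
  obtain ⟨S₁, S₂, hcov, hch₁, hch₂⟩ :=
    two_chain_cover le href htrans hanti (Finset.range n).card (Finset.range n) rfl hwidth
  refine ⟨fun u => (((S₁.filter (fun i => u ∈ wside G vtx i)).card : ℤ),
      ((((S₂ \ S₁)).filter (fun i => u ∈ wside G vtx i)).card : ℤ)), ?_⟩
  intro u hu v hv
  dsimp only
  have hF3 : G.dist u v = ((Finset.range n).filter (wsep G vtx u v)).card :=
    dist_eq_wsep_card hG h0 hn hnd hadjv hdp hu hv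
  have hsplit : Finset.range n = S₁ ∪ (S₂ \ S₁) := by
    rw [Finset.union_sdiff_self_eq_union, hcov]
  have hdisj : Disjoint S₁ (S₂ \ S₁) := Finset.disjoint_sdiff
  have hcards : ((Finset.range n).filter (wsep G vtx u v)).card
      = (S₁.filter (wsep G vtx u v)).card + ((S₂ \ S₁).filter (wsep G vtx u v)).card := by
    rw [hsplit, Finset.filter_union,
      Finset.card_union_of_disjoint (Finset.disjoint_filter_filter hdisj)]
  have hconv : ∀ (T : Finset ℕ), (∀ x ∈ T, ∀ y ∈ T, le x y ∨ le y x) →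
      ∀ x ∈ T, ∀ y ∈ T, x = y ∨ wle G vtx p q x y ∨ wle G vtx p q y x := by
    intro T hc x hx y hy
    rcases hc x hx y hy with h | h
    · rcases h with h | ⟨_, _, h⟩
      · exact Or.inl h
      · exact Or.inr (Or.inl h)
    · rcases h with h | ⟨_, _, h⟩
      · exact Or.inl h.symm
      · exact Or.inr (Or.inr h)
  have hch₂' : ∀ x ∈ S₂ \ S₁, ∀ y ∈ S₂ \ S₁, le x y ∨ le y x := fun x hx y hy =>
    hch₂ x (Finset.mem_sdiff.mp hx).1 y (Finset.mem_sdiff.mp hy).1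
  have h1 := chain_sep_card hG h0 hn hnd hadjv hdp S₁ (hconv S₁ hch₁) hu hv
  have h2 := chain_sep_card hG h0 hn hnd hadjv hdp (S₂ \ S₁) (hconv _ hch₂') hu hv
  rw [← h1, ← h2]
  have h3 : G.dist u v = (S₁.filter (wsep G vtx u v)).card
      + ((S₂ \ S₁).filter (wsep G vtx u v)).card := by rw [hF3, hcards]
  exact_mod_cast congrArg (fun m : ℕ => (m : ℤ)) h3
end

section
/- Let G be a finite median graph and let C1 and C2 be cubes of G. Let p ∈ C1 and q ∈ C2 be mutually furthest vertices, i.e., d(p,q) = max{ d(p',q') : p' ∈ C1, q' ∈ C2 }. Then C1 ∪ C2 ⊆ I(p,q), i.e., every vertex of either cube lies on a shortest path from p to q. -/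
open SimpleGraph Finset

/-- A cube of `G`: a convex set of vertices inducing a subgraph isomorphic to some
hypercube graph `Q_k`, `k ≥ 0`. -/
def IsCube {V : Type*} (G : SimpleGraph V) (C : Set V) : Prop :=
  GraphConvex G C ∧ ∃ k : ℕ, Nonempty (G.induce C ≃g cubeGraph k)

/-! ### Auxiliary lemmas -/

/-- Adjacency in the cube graph is Hamming distance one. -/
lemma cube_adj {k : ℕ} (a b : Fin k → Fin 2) :
    (cubeGraph k).Adj a b ↔ hammingDist a b = 1 := by
  have key : ∀ x y : Fin k → Fin 2, (∃! i, x i ≠ y i) ↔ hammingDist x y = 1 := by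
    intro x y
    rw [hammingDist, Finset.card_eq_one]
    constructor
    · rintro ⟨i, hi, hu⟩
      exact ⟨i, by ext j; simp only [Finset.mem_filter, Finset.mem_univ, true_and,
        Finset.mem_singleton]; exact ⟨fun h => hu j h, fun h => h ▸ hi⟩⟩
    · rintro ⟨i, hi⟩
      refine ⟨i, ?_, ?_⟩
      · have : i ∈ ({i} : Finset (Fin k)) := Finset.mem_singleton_self i
        rw [← hi] at this; simpa using this
      · intro j hj
        have : j ∈ ({i} : Finset (Fin k)) := by
          rw [← hi]; simpa using hj
        simpa using this
  rw [cubeGraph, SimpleGraph.fromRel_adj, key, key, hammingDist_comm b a, or_self]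
  constructor
  · rintro ⟨_, h⟩; exact h
  · intro h
    refine ⟨fun hab => ?_, h⟩
    rw [hab, hammingDist_self] at h; omega

lemma cube_exists_walk {k : ℕ} (a b : Fin k → Fin 2) :
    ∃ p : (cubeGraph k).Walk a b, p.length = hammingDist a b := by
  generalize hn : hammingDist a b = n
  induction n generalizing a with
  | zero =>
    obtain rfl : a = b := hammingDist_eq_zero.mp hn
    exact ⟨.nil, rfl⟩
  | succ n ih =>
    have hne : a ≠ b := by
      intro h; rw [h, hammingDist_self] at hn; omega
    obtain ⟨i, hi⟩ : ∃ i, a i ≠ b i := by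
      by_contra h; push_neg at h; exact hne (funext h)
    set a' := Function.update a i (b i) with ha'
    have hA : hammingDist a a' = 1 := by
      rw [hammingDist, Finset.card_eq_one]
      refine ⟨i, ?_⟩
      ext j
      simp only [Finset.mem_filter, Finset.mem_univ, true_and, Finset.mem_singleton, ha']
      rcases eq_or_ne j i with rfl | hji
      · simp [Function.update_self, hi]
      · simp [Function.update_of_ne hji, hji]
    have hadj : (cubeGraph k).Adj a a' := (cube_adj a a').mpr hA
    have hH : hammingDist a' b = n := by
      have hset : ({j | a' j ≠ b j} : Finset (Fin k))
          = ({j | a j ≠ b j} : Finset (Fin k)).erase i := by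
        ext j
        simp only [Finset.mem_filter, Finset.mem_univ, true_and, Finset.mem_erase, ha']
        rcases eq_or_ne j i with rfl | hji
        · simp [Function.update_self]
        · simp [Function.update_of_ne hji, hji]
      have hi' : i ∈ ({j | a j ≠ b j} : Finset (Fin k)) := by simpa using hi
      have hcard := Finset.card_erase_of_mem hi'
      rw [hammingDist, hset, hcard]
      rw [hammingDist] at hn
      omega
    obtain ⟨p, hp⟩ := ih a' hH
    exact ⟨.cons hadj p, by simp [hp]⟩

lemma cube_walk_le {k : ℕ} : ∀ {a b : Fin k → Fin 2} (p : (cubeGraph k).Walk a b),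
    hammingDist a b ≤ p.length
  | _, _, .nil => by simp
  | a, b, .cons (v := c) h p => by
    have h1 : hammingDist a c = 1 := (cube_adj a c).mp h
    have h2 := cube_walk_le p
    have h3 := hammingDist_triangle a c b
    simp only [SimpleGraph.Walk.length_cons]
    omega

lemma cube_dist {k : ℕ} (a b : Fin k → Fin 2) :
    (cubeGraph k).dist a b = hammingDist a b := by
  obtain ⟨p, hp⟩ := cube_exists_walk a b
  refine le_antisymm (hp ▸ SimpleGraph.dist_le p) ?_
  have hr : (cubeGraph k).Reachable a b := ⟨p⟩
  obtain ⟨q, hq⟩ := hr.exists_walk_length_eq_dist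
  rw [← hq]
  exact cube_walk_le q

lemma fin2_flip_ne (a : Fin 2) : a + 1 ≠ a := by revert a; decide

lemma fin2_trichotomy (a b c : Fin 2) (h : a ≠ b) : (c ≠ a ↔ c = b) := by
  revert a b c; decide

/-- In a hypercube, if `p` is a farthest vertex from `g`, then every vertex lies
between `g` and `p`. -/
lemma cube_between {k : ℕ} (g p : Fin k → Fin 2)
    (h : ∀ x, hammingDist g x ≤ hammingDist g p) (x : Fin k → Fin 2) :
    hammingDist g x + hammingDist x p = hammingDist g p := by
  have hgp : hammingDist g p = k := by
    have h1 : hammingDist g (fun i => g i + 1) = k := by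
      rw [hammingDist]
      have huniv : ({i | g i ≠ (fun i => g i + 1) i} : Finset (Fin k)) = Finset.univ := by
        ext i
        simp only [Finset.mem_filter, Finset.mem_univ, true_and, iff_true]
        exact fun h => fin2_flip_ne (g i) h.symm
      rw [huniv, Finset.card_univ, Fintype.card_fin]
    have h2 := h (fun i => g i + 1)
    have h3 : hammingDist g p ≤ k := by
      simpa using (hammingDist_le_card_fintype (x := g) (y := p))
    omega
  have hall : ∀ i, g i ≠ p i := by
    have huniv : ({i | g i ≠ p i} : Finset (Fin k)) = Finset.univ := by
      apply Finset.eq_univ_of_card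
      have : ({i | g i ≠ p i} : Finset (Fin k)).card = hammingDist g p := rfl
      rw [this, hgp, Fintype.card_fin]
    intro i
    have hmem : i ∈ ({i | g i ≠ p i} : Finset (Fin k)) := by
      rw [huniv]; exact Finset.mem_univ i
    simpa using hmem
  have hcompl : ({i | x i ≠ p i} : Finset (Fin k)) = ({i | g i ≠ x i} : Finset (Fin k))ᶜ := by
    ext i
    simp only [Finset.mem_filter, Finset.mem_univ, true_and, Finset.mem_compl, not_not]
    have := fin2_trichotomy (p i) (g i) (x i) (hall i).symm
    constructor
    · intro hxp
      exact ((fin2_trichotomy (p i) (g i) (x i) (hall i).symm).mp hxp).symm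
    · intro hgx
      rw [← hgx]
      exact hall i
  have key : hammingDist g x + hammingDist x p = Fintype.card (Fin k) := by
    rw [hammingDist, hammingDist, hcompl]
    exact Finset.card_add_card_compl _
  rw [key, Fintype.card_fin, hgp]

lemma iso_dist_le {V W : Type*} {A : SimpleGraph V} {B : SimpleGraph W} (e : A ≃g B) (u v : V) :
    B.dist (e u) (e v) ≤ A.dist u v := by
  by_cases h : A.Reachable u v
  · obtain ⟨p, hp⟩ := h.exists_walk_length_eq_dist
    calc B.dist (e u) (e v) ≤ (p.map e.toHom).length := SimpleGraph.dist_le _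
      _ = A.dist u v := by rw [SimpleGraph.Walk.length_map, hp]
  · have h2 : ¬ B.Reachable (e u) (e v) := fun hr => h (by
      have := hr.map e.symm.toHom
      simpa using this)
    rw [SimpleGraph.dist_eq_zero_of_not_reachable h,
      SimpleGraph.dist_eq_zero_of_not_reachable h2]

/-- Graph isomorphisms preserve distances. -/
lemma iso_dist {V W : Type*} {A : SimpleGraph V} {B : SimpleGraph W} (e : A ≃g B) (u v : V) :
    B.dist (e u) (e v) = A.dist u v := by
  refine le_antisymm (iso_dist_le e u v) ?_
  have := iso_dist_le e.symm (e u) (e v)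
  simpa using this

/-- A walk whose support lies in `C` transfers to the induced subgraph on `C`. -/
lemma walk_induce {V : Type*} {G : SimpleGraph V} {C : Set V} :
    ∀ {u v : V} (p : G.Walk u v), (∀ w ∈ p.support, w ∈ C) → ∀ (hu : u ∈ C) (hv : v ∈ C),
    ∃ q : (G.induce C).Walk ⟨u, hu⟩ ⟨v, hv⟩, q.length = p.length
  | _, _, .nil, _, _, _ => ⟨.nil, rfl⟩
  | x, y, .cons (v := b) h p, hs, hu, hv => by
    have hb : b ∈ C := hs b (by simp)
    obtain ⟨q, hq⟩ := walk_induce p (fun w hw => hs w (by simp [hw])) hb hv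
    exact ⟨SimpleGraph.Walk.cons (by simpa using h) q, by simp [hq]⟩

/-- On a convex set, the induced distance coincides with the distance in `G`. -/
lemma convex_dist {V : Type*} {G : SimpleGraph V} (hconn : G.Connected) {C : Set V}
    (hC : GraphConvex G C) {u v : V} (hu : u ∈ C) (hv : v ∈ C) :
    (G.induce C).dist ⟨u, hu⟩ ⟨v, hv⟩ = G.dist u v := by
  classical
  obtain ⟨p, hp⟩ := hconn.exists_walk_length_eq_dist u v
  have hsupp : ∀ w ∈ p.support, w ∈ C := by
    intro w hw
    apply hC u hu v hv
    have h1 : G.dist u w ≤ (p.takeUntil w hw).length := SimpleGraph.dist_le _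
    have h2 : G.dist w v ≤ (p.dropUntil w hw).length := SimpleGraph.dist_le _
    have h3 : (p.takeUntil w hw).length + (p.dropUntil w hw).length = p.length := by
      have := congrArg SimpleGraph.Walk.length (p.take_spec hw)
      rwa [SimpleGraph.Walk.length_append] at this
    have h4 := hconn.dist_triangle (u := u) (v := w) (w := v)
    show G.dist u w + G.dist w v = G.dist u v
    omega
  obtain ⟨q, hq⟩ := walk_induce p hsupp hu hv
  refine le_antisymm (by rw [← hp, ← hq]; exact SimpleGraph.dist_le q) ?_
  have hr : (G.induce C).Reachable ⟨u, hu⟩ ⟨v, hv⟩ := ⟨q⟩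
  obtain ⟨r, hrr⟩ := hr.exists_walk_length_eq_dist
  have hle := SimpleGraph.dist_le (r.map (SimpleGraph.Embedding.induce C).toHom)
  rw [SimpleGraph.Walk.length_map, hrr] at hle
  exact hle

/-- Convex sets in median graphs are gated: the nearest point is a gate. -/
lemma gate_exists {V : Type*} [Fintype V] {G : SimpleGraph V} (hconn : G.Connected)
    (hmed : ∀ x y z : V, ∃! m : V,
      m ∈ interval G x y ∧ m ∈ interval G y z ∧ m ∈ interval G x z)
    {C : Set V} (hC : GraphConvex G C) {p : V} (hp : p ∈ C) (q : V) :
    ∃ g ∈ C, ∀ y ∈ C, G.dist y q = G.dist y g + G.dist g q := by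
  obtain ⟨g, hg, hgmin⟩ :=
    Set.exists_min_image C (fun x => G.dist x q) (Set.toFinite C) ⟨p, hp⟩
  refine ⟨g, hg, fun y hy => ?_⟩
  obtain ⟨m, ⟨h1, h2, h3⟩, -⟩ := hmed y g q
  have hmC : m ∈ C := hC y hy g hg h1
  have hmin : G.dist g q ≤ G.dist m q := hgmin m hmC
  have e2 : G.dist g m + G.dist m q = G.dist g q := h2
  have hgm : G.dist g m = 0 := by omega
  have hgem : g = m := (hconn.dist_eq_zero_iff).mp hgm
  have e3 : G.dist y m + G.dist m q = G.dist y q := h3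
  rw [← hgem] at e3
  omega

/-- Key lemma: if `p ∈ C1` and `q` are at maximal distance, the cube `C1` lies in
`I(p,q)`. -/
lemma cube_subset_interval {V : Type*} [Fintype V] {G : SimpleGraph V}
    (hG : IsMedianGraph G) {C1 C2 : Set V} (hC1 : IsCube G C1)
    {p q : V} (hp : p ∈ C1) (hq : q ∈ C2)
    (hmax : ∀ p' ∈ C1, ∀ q' ∈ C2, G.dist p' q' ≤ G.dist p q) :
    C1 ⊆ interval G p q := by
  obtain ⟨hconn, hmed⟩ := hG
  obtain ⟨hcvx, k, ⟨e⟩⟩ := hC1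
  obtain ⟨g, hg, hgate⟩ := gate_exists hconn hmed hcvx hp q
  have hd : ∀ (u : V) (hu : u ∈ C1) (v : V) (hv : v ∈ C1),
      G.dist u v = hammingDist (e ⟨u, hu⟩) (e ⟨v, hv⟩) := by
    intro u hu v hv
    rw [← convex_dist hconn hcvx hu hv, ← cube_dist]
    exact (iso_dist e _ _).symm
  have hle : ∀ x, hammingDist (e ⟨g, hg⟩) x ≤ hammingDist (e ⟨g, hg⟩) (e ⟨p, hp⟩) := by
    intro x
    obtain ⟨⟨y, hyC⟩, hy⟩ : ∃ y : C1, e y = x := ⟨e.symm x, by simp⟩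
    rw [← hy, ← hd g hg y hyC, ← hd g hg p hp]
    have h1 := hgate y hyC
    have h2 := hgate p hp
    have h3 := hmax y hyC q hq
    have c1 : G.dist g y = G.dist y g := SimpleGraph.dist_comm
    have c2 : G.dist g p = G.dist p g := SimpleGraph.dist_comm
    omega
  intro x hx
  have hbet := cube_between _ _ hle (e ⟨x, hx⟩)
  rw [← hd g hg x hx, ← hd x hx p hp, ← hd g hg p hp] at hbet
  have h1 := hgate x hx
  have h2 := hgate p hp
  have c1 : G.dist p x = G.dist x p := SimpleGraph.dist_comm
  have c2 : G.dist g x = G.dist x g := SimpleGraph.dist_comm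
  have c3 : G.dist g p = G.dist p g := SimpleGraph.dist_comm
  show G.dist p x + G.dist x q = G.dist p q
  omega

/-- If `p ∈ C1` and `q ∈ C2` are mutually furthest vertices of two cubes
`C1, C2` of a finite median graph, then `C1 ∪ C2 ⊆ I(p,q)`. -/
theorem cubes_in_interval_of_furthest {V : Type*} [Fintype V] (G : SimpleGraph V)
    (hG : IsMedianGraph G) (C1 C2 : Set V) (hC1 : IsCube G C1) (hC2 : IsCube G C2)
    (p q : V) (hp : p ∈ C1) (hq : q ∈ C2)
    (hmax : ∀ p' ∈ C1, ∀ q' ∈ C2, G.dist p' q' ≤ G.dist p q) :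
    C1 ∪ C2 ⊆ interval G p q := by
  intro x hx
  rcases hx with hx | hx
  · exact cube_subset_interval hG hC1 hp hq hmax hx
  · have hmax' : ∀ p' ∈ C2, ∀ q' ∈ C1, G.dist p' q' ≤ G.dist q p := by
      intro p' hp' q' hq'
      have := hmax q' hq' p' hp'
      have c1 : G.dist p' q' = G.dist q' p' := SimpleGraph.dist_comm
      have c2 : G.dist q p = G.dist p q := SimpleGraph.dist_comm
      omega
    have hmem := cube_subset_interval hG hC2 hq hp hmax' hx
    have h1 : G.dist q x + G.dist x p = G.dist q p := hmem
    have c1 : G.dist q x = G.dist x q := SimpleGraph.dist_comm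
    have c2 : G.dist x p = G.dist p x := SimpleGraph.dist_comm
    have c3 : G.dist q p = G.dist p q := SimpleGraph.dist_comm
    show G.dist p x + G.dist x q = G.dist p q
    omega
end

section
/- A finite cube-free median graph with n vertices has at most 2n edges. -/
/-!
Fix a base vertex `v₀`. In a median graph the distances to `v₀` of adjacent vertices differ by
exactly one, so each edge is counted once at its endpoint farther from `v₀`, and it suffices that
every vertex `u` has at most two neighbours closer to `v₀`. If `a`, `b`, `c` were three of them,
each pair would have a second common neighbour one level further down (its median with `v₀`), and
the median of these three vertices would complete `u`, `a`, `b`, `c` to an induced `Q₃`.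
-/

open SimpleGraph Finset

theorem cubeGraph_adj_iff {k : ℕ} {x y : Fin k → Fin 2} :
    (cubeGraph k).Adj x y ↔ hammingDist x y = 1 := by
  rw [hammingDist, ← Fintype.existsUnique_iff_card_one]
  refine ⟨fun ⟨_, h⟩ => h.elim id fun h => ?_, fun h => ⟨fun hxy => ?_, .inl h⟩⟩
  · simpa only [ne_comm] using h
  · obtain ⟨i, hi, -⟩ := h
    exact hi (congrFun hxy i)

theorem cubeGraph_three_adj_iff {x y : Fin 3 → Fin 2} :
    (cubeGraph 3).Adj x y ↔
      (x 0 ≠ y 0 ∧ x 1 = y 1 ∧ x 2 = y 2) ∨ (x 0 = y 0 ∧ x 1 ≠ y 1 ∧ x 2 = y 2) ∨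
        (x 0 = y 0 ∧ x 1 = y 1 ∧ x 2 ≠ y 2) := by
  rw [cubeGraph_adj_iff]; revert x y; decide

theorem cubeGraph_three_eq_of_forall_adj_iff {x y : Fin 3 → Fin 2}
    (h : ∀ z, (cubeGraph 3).Adj x z ↔ (cubeGraph 3).Adj y z) : x = y := by
  simp only [cubeGraph_adj_iff] at h; revert x y; decide

theorem cubeGraph_three_not_adj {x y : Fin 3 → Fin 2} (h : ¬ (cubeGraph 3).Adj x y) :
    x = y ∨ (∃ z, (cubeGraph 3).Adj x z ∧ (cubeGraph 3).Adj z y) ∨ y = (x · + 1) := by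
  simp only [cubeGraph_adj_iff] at h ⊢; revert x y; decide

section CubeEmbedding

variable {V : Type*} {G : SimpleGraph V}

theorem adj_apply_of_ne {r : Fin 2 → V} (h : G.Adj (r 0) (r 1)) {s t : Fin 2} (hst : s ≠ t) :
    G.Adj (r s) (r t) := by
  fin_cases s <;> fin_cases t
  exacts [absurd rfl hst, h, h.symm, absurd rfl hst]

def cubeHom (p : Fin 2 → Fin 2 → Fin 2 → V) (h₀ : ∀ j k, G.Adj (p 0 j k) (p 1 j k))
    (h₁ : ∀ i k, G.Adj (p i 0 k) (p i 1 k)) (h₂ : ∀ i j, G.Adj (p i j 0) (p i j 1)) :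
    cubeGraph 3 →g G where
  toFun x := p (x 0) (x 1) (x 2)
  map_rel' {x y} hxy := by
    rcases cubeGraph_three_adj_iff.1 hxy with ⟨h0, h1, h2⟩ | ⟨h0, h1, h2⟩ | ⟨h0, h1, h2⟩
    · rw [h1, h2]; exact adj_apply_of_ne (r := (p · _ _)) (h₀ _ _) h0
    · rw [h0, h2]; exact adj_apply_of_ne (r := (p _ · _)) (h₁ _ _) h1
    · rw [h0, h1]; exact adj_apply_of_ne (r := (p _ _ ·)) (h₂ _ _) h2

theorem nonempty_cubeGraph_three_embedding (f : cubeGraph 3 →g G)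
    (htri : ∀ ⦃a b c⦄, G.Adj a b → G.Adj b c → ¬ G.Adj a c)
    (hanti : ∀ x, ¬ G.Adj (f x) (f (x · + 1))) : Nonempty (cubeGraph 3 ↪g G) := by
  have hadj : ∀ x y, G.Adj (f x) (f y) ↔ (cubeGraph 3).Adj x y := by
    refine fun x y => ⟨fun h => by_contra fun hxy => ?_, f.map_adj⟩
    rcases cubeGraph_three_not_adj hxy with rfl | ⟨z, hxz, hzy⟩ | rfl
    · exact G.irrefl h
    · exact htri (f.map_adj hxz) (f.map_adj hzy) h
    · exact hanti x h
  -- `Q₃` has no twins, so a map reflecting adjacency is injective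
  refine ⟨⟨⟨f, fun x y hxy => cubeGraph_three_eq_of_forall_adj_iff fun z => ?_⟩, hadj _ _⟩⟩
  rw [← hadj, ← hadj, hxy]

end CubeEmbedding

theorem SimpleGraph.edgeSet_ncard_le_of_ncard_lower_neighbors_le {V α : Type*} [Fintype V]
    [LinearOrder α] {G : SimpleGraph V} (ℓ : V → α) (hℓ : ∀ ⦃u v⦄, G.Adj u v → ℓ u ≠ ℓ v)
    {k : ℕ} (hk : ∀ u, {w | G.Adj u w ∧ ℓ w < ℓ u}.ncard ≤ k) :
    G.edgeSet.ncard ≤ k * Fintype.card V := by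
  classical
  let lower u := {w | G.Adj u w ∧ ℓ w < ℓ u}.toFinset
  have hsub : G.edgeFinset ⊆ univ.biUnion fun u => (lower u).image (s(u, ·)) := by
    intro e he
    induction e using Sym2.ind with | _ v w
    have hvw := G.mem_edgeFinset.1 he
    simp only [mem_biUnion, mem_univ, mem_image, Set.mem_toFinset, true_and, lower]
    rcases (hℓ hvw).lt_or_gt with h | h
    · exact ⟨w, v, ⟨hvw.symm, h⟩, Sym2.eq_swap⟩
    · exact ⟨v, w, ⟨hvw, h⟩, rfl⟩
  calc G.edgeSet.ncard = #G.edgeFinset := by rw [← coe_edgeFinset, Set.ncard_coe_finset]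
    _ ≤ ∑ u, #((lower u).image (s(u, ·))) := (card_le_card hsub).trans card_biUnion_le
    _ ≤ ∑ _u : V, k := sum_le_sum fun u _ => card_image_le.trans <| by
        rw [← Set.ncard_eq_toFinset_card']; exact hk u
    _ = k * Fintype.card V := by rw [sum_const, card_univ, smul_eq_mul, mul_comm]

theorem mem_interval {V : Type*} {G : SimpleGraph V} {u v w : V} :
    w ∈ interval G u v ↔ G.dist u w + G.dist w v = G.dist u v :=
  Iff.rfl

theorem mem_interval_of_adj_of_adj {V : Type*} {G : SimpleGraph V} {a v b : V}
    (hav : G.Adj a v) (hvb : G.Adj v b) (hab : G.dist a b = 2) : v ∈ interval G a b := by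
  rw [mem_interval, dist_eq_one_iff_adj.2 hav, dist_eq_one_iff_adj.2 hvb, hab]

namespace IsMedianGraph

variable {V : Type*} {G : SimpleGraph V}

theorem not_adj_of_adj_of_adj (hG : IsMedianGraph G) {x y z : V} (hxy : G.Adj x y)
    (hyz : G.Adj y z) : ¬ G.Adj x z := fun hxz => by
  obtain ⟨m, ⟨h₁, h₂, h₃⟩, -⟩ := hG.2 x y z
  simp only [mem_interval, dist_eq_one_iff_adj.2 hxy, dist_eq_one_iff_adj.2 hyz,
    dist_eq_one_iff_adj.2 hxz, dist_comm (u := m) (v := y)] at h₁ h₂ h₃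
  omega

theorem dist_eq_two_of_adj_of_adj (hG : IsMedianGraph G) {a v b : V} (hav : G.Adj a v)
    (hvb : G.Adj v b) (hab : a ≠ b) : G.dist a b = 2 := by
  have hle : G.dist a b ≤ 2 := hG.1.dist_triangle.trans
    (by rw [dist_eq_one_iff_adj.2 hav, dist_eq_one_iff_adj.2 hvb])
  have h₀ : G.dist a b ≠ 0 := fun h => hab ((hG.1.preconnected a b).dist_eq_zero_iff.1 h)
  have h₁ : G.dist a b ≠ 1 := fun h => hG.not_adj_of_adj_of_adj hav hvb (dist_eq_one_iff_adj.1 h)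
  omega

theorem eq_of_adj_of_adj_of_adj (hG : IsMedianGraph G) {a b c v w : V}
    (hab : a ≠ b) (hac : a ≠ c) (hbc : b ≠ c) (hva : G.Adj v a) (hvb : G.Adj v b) (hvc : G.Adj v c)
    (hwa : G.Adj w a) (hwb : G.Adj w b) (hwc : G.Adj w c) : v = w := by
  have hmed : ∀ u, G.Adj u a → G.Adj u b → G.Adj u c →
      u ∈ interval G a b ∧ u ∈ interval G b c ∧ u ∈ interval G a c := fun u ha hb hc =>
    ⟨mem_interval_of_adj_of_adj ha.symm hb (hG.dist_eq_two_of_adj_of_adj ha.symm hb hab),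
      mem_interval_of_adj_of_adj hb.symm hc (hG.dist_eq_two_of_adj_of_adj hb.symm hc hbc),
      mem_interval_of_adj_of_adj ha.symm hc (hG.dist_eq_two_of_adj_of_adj ha.symm hc hac)⟩
  exact (hG.2 a b c).unique (hmed v hva hvb hvc) (hmed w hwa hwb hwc)

theorem exists_adj_adj_adj (hG : IsMedianGraph G) {x y z : V} (hxy : G.dist x y = 2)
    (hyz : G.dist y z = 2) (hxz : G.dist x z = 2) : ∃ m, G.Adj x m ∧ G.Adj m y ∧ G.Adj m z := by
  obtain ⟨m, ⟨h₁, h₂, h₃⟩, -⟩ := hG.2 x y z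
  simp only [mem_interval, hxy, hyz, hxz, dist_comm (u := y) (v := m)] at h₁ h₂ h₃
  exact ⟨m, dist_eq_one_iff_adj.1 (by omega), dist_eq_one_iff_adj.1 (by omega),
    dist_eq_one_iff_adj.1 (by omega)⟩

theorem dist_add_one_eq_or_of_adj (hG : IsMedianGraph G) (v₀ : V) {x y : V} (h : G.Adj x y) :
    G.dist v₀ x + 1 = G.dist v₀ y ∨ G.dist v₀ y + 1 = G.dist v₀ x := by
  obtain ⟨m, ⟨h₁, h₂, h₃⟩, -⟩ := hG.2 x y v₀
  rw [mem_interval, dist_eq_one_iff_adj.2 h] at h₁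
  rw [mem_interval] at h₂ h₃
  rw [dist_comm (u := v₀) (v := x), dist_comm (u := v₀) (v := y)]
  rcases Nat.add_eq_one_iff.1 h₁ with ⟨hm, -⟩ | ⟨-, hm⟩
  · rw [← (hG.1.preconnected x m).dist_eq_zero_iff.1 hm, dist_eq_one_iff_adj.2 h.symm] at h₂
    omega
  · rw [(hG.1.preconnected m y).dist_eq_zero_iff.1 hm, dist_eq_one_iff_adj.2 h] at h₃
    omega

theorem exists_adj_adj_dist_add_one_eq (hG : IsMedianGraph G) (v₀ : V) {a b : V}
    (hab : G.dist a b = 2) (hlevel : G.dist v₀ a = G.dist v₀ b) :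
    ∃ m, G.Adj a m ∧ G.Adj m b ∧ G.dist v₀ m + 1 = G.dist v₀ a := by
  obtain ⟨m, ⟨h₁, h₂, h₃⟩, -⟩ := hG.2 a v₀ b
  simp only [mem_interval, hab, dist_comm (u := a) (v := v₀),
    dist_comm (u := m) (v := v₀)] at h₁ h₂ h₃
  exact ⟨m, dist_eq_one_iff_adj.1 (by omega), dist_eq_one_iff_adj.1 (by omega), by omega⟩

theorem not_cubeFree_of_three_squares (hG : IsMedianGraph G) {u a b c x y z : V}
    (hab : a ≠ b) (hac : a ≠ c) (hbc : b ≠ c)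
    (hua : G.Adj u a) (hub : G.Adj u b) (huc : G.Adj u c)
    (hax : G.Adj a x) (hbx : G.Adj b x) (hay : G.Adj a y) (hcy : G.Adj c y)
    (hbz : G.Adj b z) (hcz : G.Adj c z) (hxu : x ≠ u) (hyu : y ≠ u) (hzu : z ≠ u) :
    ¬ CubeFree G := by
  have hu : ∀ v, G.Adj v a → G.Adj v b → G.Adj v c → v = u := fun v ha hb hc =>
    hG.eq_of_adj_of_adj_of_adj hab hac hbc ha hb hc hua hub huc
  have hcx : ¬ G.Adj c x := fun h => hxu (hu x hax.symm hbx.symm h.symm)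
  have hby : ¬ G.Adj b y := fun h => hyu (hu y hay.symm h.symm hcy.symm)
  have haz : ¬ G.Adj a z := fun h => hzu (hu z h.symm hbz.symm hcz.symm)
  have hxy : x ≠ y := by rintro rfl; exact hcx hcy
  have hxz : x ≠ z := by rintro rfl; exact haz hax
  have hyz : y ≠ z := by rintro rfl; exact hby hbz
  obtain ⟨m, hxm, hmy, hmz⟩ := hG.exists_adj_adj_adj
    (hG.dist_eq_two_of_adj_of_adj hax.symm hay hxy)
    (hG.dist_eq_two_of_adj_of_adj hcy.symm hcz hyz)
    (hG.dist_eq_two_of_adj_of_adj hbx.symm hbz hxz)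
  -- otherwise `a` and `m` would be two common neighbours of `x`, `y` and `u`
  have hum : ¬ G.Adj u m := fun h => haz <| by
    rwa [hG.eq_of_adj_of_adj_of_adj hxy hxu hyu hax hay hua.symm hxm.symm hmy h.symm]
  -- in these cube coordinates `u`, `a`, `b`, `c` are `000`, `100`, `010`, `001`
  let p : Fin 2 → Fin 2 → Fin 2 → V := ![![![u, c], ![b, z]], ![![a, y], ![x, m]]]
  have hanti : ∀ i j k, ¬ G.Adj (p i j k) (p (i + 1) (j + 1) (k + 1)) := by
    simp only [Fin.forall_fin_two]
    exact ⟨⟨⟨hum, hcx⟩, hby, fun h => haz h.symm⟩, ⟨haz, fun h => hby h.symm⟩,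
      fun h => hcx h.symm, fun h => hum h.symm⟩
  refine fun hcf => hcf <| nonempty_cubeGraph_three_embedding
    (cubeHom p ?_ ?_ ?_) (fun _ _ _ => hG.not_adj_of_adj_of_adj) fun v => hanti (v 0) (v 1) (v 2)
  all_goals simp only [Fin.forall_fin_two]
  exacts [⟨⟨hua, hcy⟩, hbx, hmz.symm⟩, ⟨⟨hub, hcz⟩, hax, hmy.symm⟩, ⟨⟨huc, hbz⟩, hay, hxm⟩]

theorem ncard_lower_neighbors_le_two [Finite V] (hG : IsMedianGraph G) (hcf : CubeFree G)
    (v₀ u : V) : {w | G.Adj u w ∧ G.dist v₀ w < G.dist v₀ u}.ncard ≤ 2 := by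
  set S := {w | G.Adj u w ∧ G.dist v₀ w < G.dist v₀ u}
  by_contra! h
  obtain ⟨a, ha, b, hb, c, hc, hab, hac, hbc⟩ := (Set.two_lt_ncard S.toFinite).1 h
  have hlevel : ∀ w ∈ S, G.dist v₀ w + 1 = G.dist v₀ u := fun w ⟨huw, hw⟩ => by
    rcases hG.dist_add_one_eq_or_of_adj v₀ huw with h | h <;> omega
  have hsquare : ∀ v ∈ S, ∀ w ∈ S, v ≠ w → ∃ s, G.Adj v s ∧ G.Adj s w ∧ s ≠ u := by
    intro v hv w hw hvw
    have hv' := hlevel v hv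
    have hw' := hlevel w hw
    obtain ⟨s, hvs, hsw, hs⟩ := hG.exists_adj_adj_dist_add_one_eq v₀
      (hG.dist_eq_two_of_adj_of_adj hv.1.symm hw.1 hvw) (by omega)
    exact ⟨s, hvs, hsw, by rintro rfl; omega⟩
  obtain ⟨x, hax, hxb, hxu⟩ := hsquare a ha b hb hab
  obtain ⟨y, hay, hyc, hyu⟩ := hsquare a ha c hc hac
  obtain ⟨z, hbz, hzc, hzu⟩ := hsquare b hb c hc hbc
  exact hG.not_cubeFree_of_three_squares hab hac hbc ha.1 hb.1 hc.1 hax hxb.symm hay hyc.symm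
    hbz hzc.symm hxu hyu hzu hcf

end IsMedianGraph

/-- A finite cube-free median graph with `n` vertices has at most `2n` edges. -/
theorem edges_le_two_mul_card {V : Type*} [Fintype V] (G : SimpleGraph V)
    (hG : IsMedianGraph G) (hcf : CubeFree G) :
    G.edgeSet.ncard ≤ 2 * Fintype.card V := by
  obtain ⟨v₀⟩ := hG.1.nonempty
  refine G.edgeSet_ncard_le_of_ncard_lower_neighbors_le (G.dist v₀) (fun u v huv => ?_)
    (hG.ncard_lower_neighbors_le_two hcf v₀)
  rcases hG.dist_add_one_eq_or_of_adj v₀ huv with h | h <;> omega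
end
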